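/- arXiv:1602.08673 — 7 statements merged into one kernel-verified Lean document; each statement's English description precedes it below -/
import Mathlib

section
/- Let A_0, …, A_n be m×m complex matrices with A_n invertible, and let w_0, …, w_n be complex numbers. If det(A_n w_n + A_{n−1} w_{n−1} + ⋯ + A_1 w_1 + A_0 w_0) = 0, then ‖A_n^{-1}‖^{-1} · |w_n| ≤ ‖A_{n−1}‖·|w_{n−1}| + ⋯ + ‖A_1‖·|w_1| + ‖A_0‖·|w_0|, where ‖·‖ denotes the L∞ operator norm on m×m complex matrices (the maximum absolute row-sum norm, i.e., the operator norm induced by the sup norm on ℂ^m). -/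
attribute [local instance] Matrix.linftyOpNormedRing

attribute [local instance] Matrix.linftyOpNormedAlgebra

/-- If `A n` is invertible and `det (∑ j ≤ n, w j • A j) = 0`, then
`‖(A n)⁻¹‖⁻¹ * |w n| ≤ ∑_{j<n} ‖A j‖ * |w j|` in the L∞ operator norm
(maximum absolute row-sum norm). -/
theorem det_eq_zero_norm_ineq (m n : ℕ) (A : ℕ → Matrix (Fin m) (Fin m) ℂ)
    (hAn : IsUnit (A n)) (w : ℕ → ℂ)
    (h : (∑ j ∈ Finset.range (n + 1), w j • A j).det = 0) :
    ‖(A n)⁻¹‖⁻¹ * ‖w n‖ ≤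
      ∑ j ∈ Finset.range n, ‖A j‖ * ‖w j‖ := by
  rcases Nat.eq_zero_or_pos m with hm | hm
  · subst hm
    rw [Matrix.det_isEmpty] at h
    exact absurd h one_ne_zero
  haveI : Nonempty (Fin m) := ⟨⟨0, hm⟩⟩
  set B := ∑ j ∈ Finset.range n, w j • A j with hB
  have hdet : IsUnit (A n).det := (Matrix.isUnit_iff_isUnit_det _).mp hAn
  have hinv : (A n)⁻¹ * A n = 1 := Matrix.nonsing_inv_mul _ hdet
  have hmem : w n ∈ spectrum ℂ (-((A n)⁻¹ * B)) := by
    rw [spectrum.mem_iff]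
    intro hU
    have heq : algebraMap ℂ (Matrix (Fin m) (Fin m) ℂ) (w n) - (-((A n)⁻¹ * B)) =
        (A n)⁻¹ * (∑ j ∈ Finset.range (n + 1), w j • A j) := by
      rw [Finset.sum_range_succ, ← hB, Matrix.mul_add, Matrix.mul_smul, hinv,
        Algebra.algebraMap_eq_smul_one, sub_neg_eq_add, add_comm]
    rw [heq] at hU
    have := (Matrix.isUnit_iff_isUnit_det _).mp hU
    rw [Matrix.det_mul, h, mul_zero] at this
    exact this.ne_zero rfl
  have hle : ‖w n‖ ≤ ‖(A n)⁻¹‖ * ‖B‖ :=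
    (spectrum.norm_le_norm_of_mem hmem).trans
      ((norm_neg _).le.trans_eq' rfl |>.trans (norm_mul_le _ _))
  have hBle : ‖B‖ ≤ ∑ j ∈ Finset.range n, ‖A j‖ * ‖w j‖ := by
    refine (norm_sum_le _ _).trans ?_
    refine Finset.sum_le_sum fun j _ => ?_
    rw [norm_smul, mul_comm]
  have hpos : 0 < ‖(A n)⁻¹‖ := by
    rw [norm_pos_iff]
    intro h0
    rw [h0, Matrix.zero_mul] at hinv
    exact one_ne_zero (hinv.symm : (1 : Matrix (Fin m) (Fin m) ℂ) = 0)
  rw [inv_mul_le_iff₀ hpos]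
  calc ‖w n‖ = ‖w n‖ := rfl
    _ ≤ ‖(A n)⁻¹‖ * ‖B‖ := hle
    _ ≤ _ := by
        exact mul_le_mul_of_nonneg_left hBle (norm_nonneg _)
end

section
/- Let P(z) = A_n z^n + A_{n−1} z^{n−1} + ⋯ + A_1 z + A_0 be a matrix polynomial with m×m complex matrix coefficients, where n ≥ 1, A_n is invertible, and not all of A_0, …, A_{n−1} are zero. Let ρ be the unique positive root of ‖A_n^{-1}‖^{-1} x^n − ‖A_{n−1}‖ x^{n−1} − ⋯ − ‖A_1‖ x − ‖A_0‖ = 0, where ‖·‖ denotes the L∞ operator norm on m×m complex matrices (the maximum absolute row-sum norm, i.e., the operator norm induced by the sup norm on ℂ^m). Then every eigenvalue z of P, i.e., every complex z with det P(z) = 0, satisfies |z| ≤ ρ. -/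
attribute [local instance] Matrix.linftyOpNormedRing
attribute [local instance] Matrix.linftyOpNormedAlgebra

/-- Cauchy's bound for matrix polynomials: if `A n` is invertible, not all of
`A 0, …, A (n-1)` are zero, and `ρ > 0` is the (unique) positive root of
`‖(A n)⁻¹‖⁻¹ x^n = ∑_{j<n} ‖A j‖ x^j` (L∞ operator norm), then every
eigenvalue `z` of `P(z) = ∑_{j≤n} A j z^j`, i.e. every `z` with
`det P(z) = 0`, satisfies `|z| ≤ ρ`. -/
theorem cauchy_bound_matrix_polynomial (m n : ℕ) (hn : 1 ≤ n)
    (A : ℕ → Matrix (Fin m) (Fin m) ℂ) (hAn : IsUnit (A n))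
    (hne : ∃ j < n, A j ≠ 0) (ρ : ℝ) (hρ : 0 < ρ)
    (hρeq : ‖(A n)⁻¹‖⁻¹ * ρ ^ n = ∑ j ∈ Finset.range n, ‖A j‖ * ρ ^ j)
    (z : ℂ) (hz : (∑ j ∈ Finset.range (n + 1), z ^ j • A j).det = 0) :
    ‖z‖ ≤ ρ := by
  rcases Nat.eq_zero_or_pos m with hm | hm
  · subst hm
    have h1 : (∑ j ∈ Finset.range (n + 1), z ^ j • A j).det = 1 := Matrix.det_isEmpty
    rw [hz] at h1
    exact absurd h1 zero_ne_one
  by_contra hcon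
  push_neg at hcon
  set x := ‖z‖ with hxdef
  have hx0 : 0 < x := lt_trans hρ hcon
  set B := (A n)⁻¹ with hB
  set c : ℝ := ‖B‖⁻¹ with hc
  have hAdet : IsUnit (A n).det := (Matrix.isUnit_iff_isUnit_det _).mp hAn
  have hmul : A n * B = 1 := Matrix.mul_nonsing_inv _ hAdet
  -- positivity of the RHS sum, hence of c
  have hsum : 0 < ∑ j ∈ Finset.range n, ‖A j‖ * ρ ^ j := by
    obtain ⟨j, hj, hAj⟩ := hne
    refine Finset.sum_pos' (fun i _ => by positivity) ⟨j, Finset.mem_range.mpr hj, ?_⟩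
    have : 0 < ‖A j‖ := norm_pos_iff.mpr hAj
    positivity
  have hcpos : 0 < c := by
    have hρn : (0:ℝ) < ρ ^ n := pow_pos hρ n
    nlinarith [hρeq]
  have hBpos : 0 < ‖B‖ := by
    rcases (norm_nonneg B).lt_or_eq with h | h
    · exact h
    · exfalso; rw [hc, ← h] at hcpos; simp at hcpos
  have hBc : ‖B‖ * c = 1 := by
    rw [hc]; field_simp
  -- key strict inequality for x > ρ
  have key : ∑ j ∈ Finset.range n, ‖A j‖ * x ^ j < c * x ^ n := by
    have hxρ : 1 ≤ x / ρ := (one_le_div hρ).mpr hcon.le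
    have hstep : ∑ j ∈ Finset.range n, ‖A j‖ * x ^ j
        ≤ (∑ j ∈ Finset.range n, ‖A j‖ * ρ ^ j) * (x / ρ) ^ (n - 1) := by
      rw [Finset.sum_mul]
      refine Finset.sum_le_sum fun j hj => ?_
      have hjn : j ≤ n - 1 := Nat.le_sub_one_of_lt (Finset.mem_range.mp hj)
      have h1 : x ^ j = ρ ^ j * (x / ρ) ^ j := by
        rw [← mul_pow, mul_div_cancel₀ x hρ.ne']
      have h2 : (x / ρ) ^ j ≤ (x / ρ) ^ (n - 1) := pow_le_pow_right₀ hxρ hjn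
      calc ‖A j‖ * x ^ j = ‖A j‖ * (ρ ^ j * (x / ρ) ^ j) := by rw [h1]
        _ ≤ ‖A j‖ * (ρ ^ j * (x / ρ) ^ (n - 1)) :=
            mul_le_mul_of_nonneg_left
              (mul_le_mul_of_nonneg_left h2 (pow_pos hρ j).le) (norm_nonneg _)
        _ = ‖A j‖ * ρ ^ j * (x / ρ) ^ (n - 1) := by ring
    have hlast : (∑ j ∈ Finset.range n, ‖A j‖ * ρ ^ j) * (x / ρ) ^ (n - 1) < c * x ^ n := by
      rw [← hρeq]
      have h3 : (x / ρ) ^ (n - 1) < (x / ρ) ^ n :=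
        pow_lt_pow_right₀ ((one_lt_div hρ).mpr hcon) (Nat.sub_lt hn one_pos)
      calc (c * ρ ^ n) * (x / ρ) ^ (n - 1) < (c * ρ ^ n) * (x / ρ) ^ n :=
            mul_lt_mul_of_pos_left h3 (by positivity)
        _ = c * x ^ n := by rw [mul_assoc, ← mul_pow, mul_div_cancel₀ x hρ.ne']
    exact lt_of_le_of_lt hstep hlast
  -- norm bound on the lower part S
  set S := ∑ j ∈ Finset.range n, z ^ j • A j with hSdef
  have hS : ‖S‖ ≤ ∑ j ∈ Finset.range n, ‖A j‖ * x ^ j := by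
    refine (norm_sum_le _ _).trans (Finset.sum_le_sum fun j _ => ?_)
    rw [norm_smul, norm_pow, mul_comm]
  have hSlt : ‖S‖ < c * x ^ n := lt_of_le_of_lt hS key
  have hzn : (z ^ n : ℂ) ≠ 0 := pow_ne_zero _ (by
    intro h0
    rw [h0] at hxdef
    simp [hxdef] at hx0)
  -- factor P(z) = (z^n • A n) * (1 + T)
  set T := (z ^ n)⁻¹ • (B * S) with hTdef
  have hfac : ∑ j ∈ Finset.range (n + 1), z ^ j • A j = (z ^ n • A n) * (1 + T) := by
    rw [Finset.sum_range_succ, mul_add, mul_one, hTdef]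
    rw [smul_mul_smul_comm, mul_inv_cancel₀ hzn, one_smul, ← mul_assoc, hmul, one_mul]
    exact add_comm _ _
  -- T has norm < 1
  have hT : ‖T‖ < 1 := by
    have h1 : ‖T‖ ≤ (x ^ n)⁻¹ * (‖B‖ * ‖S‖) := by
      rw [hTdef, norm_smul, norm_inv, norm_pow, ← hxdef]
      exact mul_le_mul_of_nonneg_left (norm_mul_le _ _) (by positivity)
    have h2 : ‖B‖ * ‖S‖ < ‖B‖ * (c * x ^ n) := mul_lt_mul_of_pos_left hSlt hBpos
    have h3 : ‖B‖ * (c * x ^ n) = x ^ n := by rw [← mul_assoc, hBc, one_mul]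
    have hxn : (0:ℝ) < x ^ n := pow_pos hx0 n
    calc ‖T‖ ≤ (x ^ n)⁻¹ * (‖B‖ * ‖S‖) := h1
      _ < (x ^ n)⁻¹ * (x ^ n) := by
          rw [← h3]
          exact mul_lt_mul_of_pos_left h2 (by positivity)
      _ = 1 := inv_mul_cancel₀ hxn.ne'
  -- 1 + T is a unit
  have hunitT : IsUnit (1 + T) := by
    have := (Units.oneSub (-T) (by simpa using hT)).isUnit
    simpa [sub_neg_eq_add] using this
  have hunitL : IsUnit (z ^ n • A n) := by
    rw [Matrix.isUnit_iff_isUnit_det, Matrix.det_smul]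
    exact (IsUnit.pow _ (isUnit_iff_ne_zero.mpr hzn)).mul hAdet
  have hdet : IsUnit (∑ j ∈ Finset.range (n + 1), z ^ j • A j).det := by
    rw [← Matrix.isUnit_iff_isUnit_det, hfac]
    exact hunitL.mul hunitT
  rw [hz] at hdet
  exact hdet.ne_zero rfl
end

section
/- Let n ≥ 1 and for each j = 0, 1, …, n let q_j be a complex polynomial of degree exactly j. For each j with 1 ≤ j ≤ n let r_{1j}, …, r_{jj} denote the roots of q_j listed with multiplicity, and suppose there exist a constant γ > 0 and, for each such j, nonnegative reals α_1^{(j)}, …, α_j^{(j)} with α_1^{(j)} + ⋯ + α_j^{(j)} ≤ γ, such that for every complex z that is not a root of q_j, |q_{j−1}(z)/q_j(z)| ≤ Σ_{i=1}^{j} α_i^{(j)}/|z − r_{ij}|. Let A_0, …, A_n be m×m complex matrices with A_n invertible, and let z be a complex number with det(A_n q_n(z) + A_{n−1} q_{n−1}(z) + ⋯ + A_0 q_0(z)) = 0. Set d = min over 1 ≤ k ≤ n and over roots r of q_k of |z − r|. Then ‖A_n^{-1}‖^{-1} (d/γ)^n ≤ Σ_{j=0}^{n−1} ‖A_j‖ (d/γ)^j,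 where ‖·‖ denotes the L∞ operator norm on m×m complex matrices (the maximum absolute row-sum norm, i.e., the operator norm induced by the sup norm on ℂ^m). In particular, z lies in the union over 1 ≤ k ≤ n and over roots r of q_k of the closed disks {w : |w − r| ≤ γρ}, where ρ is any positive number with ‖A_n^{-1}‖^{-1} ρ^n = Σ_{j=0}^{n−1} ‖A_j‖ ρ^j. -/
attribute [local instance] Matrix.linftyOpNormedRing

lemma my_sum_mulVec {m : ℕ} (s : Finset ℕ) (M : ℕ → Matrix (Fin m) (Fin m) ℂ)
    (v : Fin m → ℂ) :
    (∑ j ∈ s, M j).mulVec v = ∑ j ∈ s, (M j).mulVec v := by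
  ext i
  simp only [Matrix.mulVec, dotProduct, Matrix.sum_apply, Finset.sum_mul, Finset.sum_apply]
  rw [Finset.sum_comm]

/-- Inclusion part of the main theorem: under the ratio condition on the
basis `q 0, …, q n`, any eigenvalue `z` of `P(z) = ∑_{j≤n} A j • q j (z)`
(i.e. `det P(z) = 0`, with `A n` invertible) satisfies
`‖(A n)⁻¹‖⁻¹ (d/γ)^n ≤ ∑_{j<n} ‖A j‖ (d/γ)^j`, where `d` is the distance
from `z` to the set of roots of `q 1, …, q n`.  In particular `z` lies in
the union of the closed disks of radius `γρ` about those roots, where `ρ`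
is any positive root of `‖(A n)⁻¹‖⁻¹ ρ^n = ∑_{j<n} ‖A j‖ ρ^j`. -/
theorem main_inclusion (n : ℕ) (hn : 1 ≤ n) (q : ℕ → Polynomial ℂ)
    (hdeg : ∀ j ≤ n, (q j).degree = j) (γ : ℝ) (hγ : 0 < γ)
    (hbasis : ∀ j, 1 ≤ j → j ≤ n →
      ∃ (r : Fin j → ℂ) (α : Fin j → ℝ),
        (q j).roots = Multiset.map r Finset.univ.val ∧
        (∀ i, 0 ≤ α i) ∧ (∑ i, α i) ≤ γ ∧
        ∀ w : ℂ, (q j).eval w ≠ 0 →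
          ‖(q (j - 1)).eval w / (q j).eval w‖ ≤
            ∑ i, α i / ‖w - r i‖)
    (m : ℕ) (A : ℕ → Matrix (Fin m) (Fin m) ℂ) (hAn : IsUnit (A n))
    (z : ℂ)
    (hz : (∑ j ∈ Finset.range (n + 1), (q j).eval z • A j).det = 0)
    (d : ℝ)
    (hd : IsLeast {x : ℝ | ∃ k, 1 ≤ k ∧ k ≤ n ∧
      ∃ rt ∈ (q k).roots, x = ‖z - rt‖} d) :
    ‖(A n)⁻¹‖⁻¹ * (d / γ) ^ n ≤ ∑ j ∈ Finset.range n, ‖A j‖ * (d / γ) ^ j ∧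
    ∀ ρ : ℝ, 0 < ρ →
      ‖(A n)⁻¹‖⁻¹ * ρ ^ n = ∑ j ∈ Finset.range n, ‖A j‖ * ρ ^ j →
      ∃ k, 1 ≤ k ∧ k ≤ n ∧ ∃ rt ∈ (q k).roots,
        ‖z - rt‖ ≤ γ * ρ := by
  classical
  -- m = 0 is impossible
  rcases Nat.eq_zero_or_pos m with hm | hm
  · subst hm
    rw [Matrix.det_isEmpty] at hz
    exact absurd hz one_ne_zero
  haveI : Nonempty (Fin m) := ⟨⟨0, hm⟩⟩
  obtain ⟨k₀, hk₀1, hk₀n, rt₀, hrt₀, hdeq⟩ := hd.1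
  have hd0 : 0 ≤ d := hdeq ▸ (norm_nonneg _)
  have hAnd : IsUnit (A n).det := (Matrix.isUnit_iff_isUnit_det _).1 hAn
  have hKpos : 0 < ‖(A n)⁻¹‖ := by
    rw [norm_pos_iff]
    intro h
    have h1 := Matrix.nonsing_inv_mul (A n) hAnd
    rw [h, Matrix.zero_mul] at h1
    exact zero_ne_one h1
  have hn0 : n ≠ 0 := by omega
  -- main inequality
  have key : ‖(A n)⁻¹‖⁻¹ * (d / γ) ^ n ≤ ∑ j ∈ Finset.range n, ‖A j‖ * (d / γ) ^ j := by
    rcases eq_or_lt_of_le hd0 with hd0' | hdpos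
    · have hzero : ‖(A n)⁻¹‖⁻¹ * (d / γ) ^ n = 0 := by
        rw [← hd0']
        simp [zero_div, zero_pow hn0]
      rw [hzero]
      apply Finset.sum_nonneg
      intro j hj
      have : 0 ≤ (d / γ) ^ j := by positivity
      positivity
    -- nonvanishing of q k at z
    · have hq0 : ∀ k, 1 ≤ k → k ≤ n → (q k).eval z ≠ 0 := by
        intro k hk1 hkn hzero
        have hqk : q k ≠ 0 := by
          intro h
          have hh := hdeg k hkn
          rw [h] at hh
          simp at hh
        have hmem : z ∈ (q k).roots := (Polynomial.mem_roots hqk).2 hzero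
        have hle : d ≤ ‖z - z‖ := hd.2 ⟨k, hk1, hkn, z, hmem, rfl⟩
        simp at hle
        linarith
      have hdist : ∀ k, 1 ≤ k → k ≤ n → ∀ rt ∈ (q k).roots,
          d ≤ ‖z - rt‖ := fun k h1 h2 rt hrt => hd.2 ⟨k, h1, h2, rt, hrt, rfl⟩
      -- one-step ratio bound
      have hstep : ∀ j, 1 ≤ j → j ≤ n →
          ‖(q (j - 1)).eval z‖ ≤ γ / d * ‖(q j).eval z‖ := by
        intro j h1 h2
        obtain ⟨r, α, hroots, hα0, hαsum, hineq⟩ := hbasis j h1 h2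
        have hqz := hq0 j h1 h2
        have h := hineq z hqz
        have hb : ∀ i, α i / ‖z - r i‖ ≤ α i / d := by
          intro i
          apply div_le_div_of_nonneg_left (hα0 i) hdpos
          apply hdist j h1 h2
          rw [hroots]
          exact Multiset.mem_map_of_mem r (Finset.mem_univ_val i)
        have hbpos : 0 < ‖(q j).eval z‖ := norm_pos_iff.2 hqz
        have h2' : ‖(q (j - 1)).eval z‖ / ‖(q j).eval z‖ ≤ γ / d := by
          calc ‖(q (j - 1)).eval z‖ / ‖(q j).eval z‖
              = ‖(q (j - 1)).eval z / (q j).eval z‖ := (norm_div _ _).symm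
            _ ≤ ∑ i, α i / ‖z - r i‖ := h
            _ ≤ ∑ i, α i / d := Finset.sum_le_sum fun i _ => hb i
            _ = (∑ i, α i) / d := (Finset.sum_div _ _ _).symm
            _ ≤ γ / d := by
                apply div_le_div_of_nonneg_right hαsum hdpos.le
        exact (div_le_iff₀ hbpos).1 h2'
      -- iterated ratio bound
      have hchain : ∀ k, k ≤ n →
          ‖(q (n - k)).eval z‖ ≤ (γ / d) ^ k * ‖(q n).eval z‖ := by
        intro k
        induction k with
        | zero => intro _; simp
        | succ k ih =>
          intro hk
          have hk' : k ≤ n := by omega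
          have h1 : 1 ≤ n - k := by omega
          have hs := hstep (n - k) h1 (by omega)
          have heq : n - (k + 1) = (n - k) - 1 := by omega
          rw [heq]
          calc ‖(q ((n - k) - 1)).eval z‖
              ≤ γ / d * ‖(q (n - k)).eval z‖ := hs
            _ ≤ γ / d * ((γ / d) ^ k * ‖(q n).eval z‖) := by
                apply mul_le_mul_of_nonneg_left (ih hk') (by positivity)
            _ = (γ / d) ^ (k + 1) * ‖(q n).eval z‖ := by ring
      have hratio : ∀ j, j < n →
          ‖(q j).eval z‖ ≤ (γ / d) ^ (n - j) * ‖(q n).eval z‖ := by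
        intro j hj
        have := hchain (n - j) (by omega)
        rwa [Nat.sub_sub_self (le_of_lt hj)] at this
      -- eigenvector
      obtain ⟨v, hv0, hveq⟩ := Matrix.exists_mulVec_eq_zero_iff.2 hz
      have hvpos : 0 < ‖v‖ := norm_pos_iff.2 hv0
      have hsum : ∑ j ∈ Finset.range (n + 1), (q j).eval z • (A j).mulVec v = 0 := by
        rw [← hveq, my_sum_mulVec]
        exact Finset.sum_congr rfl fun j _ => (Matrix.smul_mulVec _ _ _).symm
      rw [Finset.sum_range_succ] at hsum
      have hsplit : (q n).eval z • (A n).mulVec v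
          = -∑ j ∈ Finset.range n, (q j).eval z • (A j).mulVec v :=
        eq_neg_of_add_eq_zero_right hsum
      have hcn := hq0 n hn le_rfl
      have hcnpos : 0 < ‖(q n).eval z‖ := norm_pos_iff.2 hcn
      have hvrec : v = (A n)⁻¹.mulVec ((A n).mulVec v) := by
        rw [Matrix.mulVec_mulVec, Matrix.nonsing_inv_mul _ hAnd, Matrix.one_mulVec]
      have hAnv : (A n).mulVec v
          = ((q n).eval z)⁻¹ • ((q n).eval z • (A n).mulVec v) := by
        rw [smul_smul, inv_mul_cancel₀ hcn, one_smul]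
      have hnorm1 : ‖v‖ ≤ ‖(A n)⁻¹‖ * ((‖(q n).eval z‖)⁻¹ *
          ∑ j ∈ Finset.range n, ‖(q j).eval z‖ * (‖A j‖ * ‖v‖)) := by
        calc ‖v‖ = ‖(A n)⁻¹.mulVec ((A n).mulVec v)‖ := by rw [← hvrec]
          _ ≤ ‖(A n)⁻¹‖ * ‖(A n).mulVec v‖ := Matrix.linfty_opNorm_mulVec _ _
          _ ≤ ‖(A n)⁻¹‖ * ((‖(q n).eval z‖)⁻¹ *
              ∑ j ∈ Finset.range n, ‖(q j).eval z‖ * (‖A j‖ * ‖v‖)) := by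
            apply mul_le_mul_of_nonneg_left _ (norm_nonneg _)
            rw [hAnv, norm_smul, hsplit, norm_neg]
            rw [norm_inv]
            apply mul_le_mul_of_nonneg_left _ (by positivity)
            calc ‖∑ j ∈ Finset.range n, (q j).eval z • (A j).mulVec v‖
                ≤ ∑ j ∈ Finset.range n, ‖(q j).eval z • (A j).mulVec v‖ :=
                  norm_sum_le _ _
              _ ≤ ∑ j ∈ Finset.range n, ‖(q j).eval z‖ * (‖A j‖ * ‖v‖) := by
                  apply Finset.sum_le_sum
                  intro j hj
                  rw [norm_smul]
                  exact mul_le_mul_of_nonneg_left (Matrix.linfty_opNorm_mulVec _ _)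
                    (norm_nonneg _)
      -- divide by ‖v‖
      have hkey0 : 1 ≤ ‖(A n)⁻¹‖ *
          ∑ j ∈ Finset.range n,
            (γ / d) ^ (n - j) * ‖A j‖ := by
        have h1 : 1 * ‖v‖ ≤ (‖(A n)⁻¹‖ *
            ∑ j ∈ Finset.range n, (γ / d) ^ (n - j) * ‖A j‖) * ‖v‖ := by
          rw [one_mul]
          refine le_trans hnorm1 ?_
          rw [mul_assoc, Finset.sum_mul, Finset.mul_sum]
          apply mul_le_mul_of_nonneg_left _ (norm_nonneg _)
          apply Finset.sum_le_sum
          intro j hj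
          have hr := hratio j (Finset.mem_range.1 hj)
          have : (‖(q n).eval z‖)⁻¹ *
              (‖(q j).eval z‖ * (‖A j‖ * ‖v‖))
              ≤ (‖(q n).eval z‖)⁻¹ *
              ((γ / d) ^ (n - j) * ‖(q n).eval z‖ * (‖A j‖ * ‖v‖)) := by
            apply mul_le_mul_of_nonneg_left _ (by positivity)
            apply mul_le_mul_of_nonneg_right hr (by positivity)
          refine le_trans this (le_of_eq ?_)
          field_simp
        exact le_of_mul_le_mul_right h1 hvpos
      -- conclude
      have hterm : ∀ j ∈ Finset.range n,
          ‖A j‖ * (d / γ) ^ j = ((γ / d) ^ (n - j) * ‖A j‖) * (d / γ) ^ n := by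
        intro j hj
        have hj' := Finset.mem_range.1 hj
        have h1 : (d / γ) ^ n = (d / γ) ^ (n - j) * (d / γ) ^ j := by
          rw [← pow_add]
          congr 1
          omega
        have h2 : (γ / d) ^ (n - j) * (d / γ) ^ (n - j) = 1 := by
          rw [← mul_pow]
          field_simp
          exact one_pow _
        calc ‖A j‖ * (d / γ) ^ j
            = ((γ / d) ^ (n - j) * (d / γ) ^ (n - j)) * (‖A j‖ * (d / γ) ^ j) := by
              rw [h2, one_mul]
          _ = ((γ / d) ^ (n - j) * ‖A j‖) * (d / γ) ^ n := by rw [h1]; ring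
      rw [Finset.sum_congr rfl hterm, ← Finset.sum_mul]
      apply mul_le_mul_of_nonneg_right _ (by positivity)
      calc ‖(A n)⁻¹‖⁻¹ = ‖(A n)⁻¹‖⁻¹ * 1 := (mul_one _).symm
        _ ≤ ‖(A n)⁻¹‖⁻¹ * (‖(A n)⁻¹‖ *
            ∑ j ∈ Finset.range n, (γ / d) ^ (n - j) * ‖A j‖) := by
          apply mul_le_mul_of_nonneg_left hkey0 (by positivity)
        _ = ∑ j ∈ Finset.range n, (γ / d) ^ (n - j) * ‖A j‖ := by
          rw [inv_mul_cancel_left₀ (ne_of_gt hKpos)]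
  refine ⟨key, ?_⟩
  intro ρ hρ hρeq
  refine ⟨k₀, hk₀1, hk₀n, rt₀, hrt₀, ?_⟩
  rw [← hdeq]
  by_contra hcon
  push_neg at hcon
  have hdpos : 0 < d := lt_trans (by positivity) hcon
  set x := d / γ with hx
  have hxpos : 0 < x := by positivity
  have hxρ : ρ < x := by
    rw [hx, lt_div_iff₀ hγ]
    linarith [mul_comm γ ρ]
  have h1 : 1 < x / ρ := (one_lt_div hρ).2 hxρ
  have hS : 0 < ∑ j ∈ Finset.range n, ‖A j‖ * ρ ^ j := by
    rw [← hρeq]; positivity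
  have hterm : ∀ j ∈ Finset.range n,
      ‖A j‖ * x ^ j ≤ (‖A j‖ * ρ ^ j) * (x / ρ) ^ (n - 1) := by
    intro j hj
    have hj' := Finset.mem_range.1 hj
    have hxj : x ^ j = ρ ^ j * (x / ρ) ^ j := by
      rw [← mul_pow, mul_div_assoc', mul_div_cancel_left₀ _ hρ.ne']
    rw [hxj, ← mul_assoc]
    apply mul_le_mul_of_nonneg_left _ (by positivity)
    apply pow_le_pow_right₀ (le_of_lt h1)
    omega
  have hsum2 : ∑ j ∈ Finset.range n, ‖A j‖ * x ^ j
      ≤ (∑ j ∈ Finset.range n, ‖A j‖ * ρ ^ j) * (x / ρ) ^ (n - 1) := by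
    rw [Finset.sum_mul]
    exact Finset.sum_le_sum hterm
  have hxn : x ^ n = ρ ^ n * (x / ρ) ^ n := by
    rw [← mul_pow, mul_div_assoc', mul_div_cancel_left₀ _ hρ.ne']
  have hC : 0 < ‖(A n)⁻¹‖⁻¹ * ρ ^ n := by positivity
  have hchain2 : (‖(A n)⁻¹‖⁻¹ * ρ ^ n) * (x / ρ) ^ n
      ≤ (‖(A n)⁻¹‖⁻¹ * ρ ^ n) * (x / ρ) ^ (n - 1) := by
    calc (‖(A n)⁻¹‖⁻¹ * ρ ^ n) * (x / ρ) ^ n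
        = ‖(A n)⁻¹‖⁻¹ * x ^ n := by rw [hxn]; ring
      _ ≤ ∑ j ∈ Finset.range n, ‖A j‖ * x ^ j := key
      _ ≤ (∑ j ∈ Finset.range n, ‖A j‖ * ρ ^ j) * (x / ρ) ^ (n - 1) := hsum2
      _ = (‖(A n)⁻¹‖⁻¹ * ρ ^ n) * (x / ρ) ^ (n - 1) := by rw [← hρeq]
  have hmono : (x / ρ) ^ n ≤ (x / ρ) ^ (n - 1) :=
    le_of_mul_le_mul_left hchain2 hC
  have hstrict : (x / ρ) ^ (n - 1) < (x / ρ) ^ n :=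
    pow_lt_pow_right₀ h1 (by omega)
  linarith
end

section
/- Let n ≥ 1 and let q_0, …, q_n, r_{ij}, α_i^{(j)}, γ be as in the main inclusion theorem: q_j is a complex polynomial of degree exactly j, with roots r_{1j}, …, r_{jj} counted with multiplicity, γ > 0, the α_i^{(j)} ≥ 0 satisfy Σ_{i=1}^j α_i^{(j)} ≤ γ, and |q_{j−1}(z)/q_j(z)| ≤ Σ_{i=1}^{j} α_i^{(j)}/|z − r_{ij}| for all z not a root of q_j. Let A_0, …, A_n be m×m complex matrices with A_n invertible, let ρ > 0 satisfy ‖A_n^{-1}‖^{-1} ρ^n = Σ_{j=0}^{n−1} ‖A_j‖ ρ^j in the L∞ operator norm, and let R be the union of the closed disks of radius γρ centered at the roots of q_1, …, q_n. Suppose R is the disjoint union of two nonempty closed sets R_1 and R_2, each a union of some of these disks, with R_1 ∩ R_2 = ∅. Then the number of zeros of det P in R_1 counted with multiplicity, where P(z) = Σ_{j=0}^n A_j q_j(z), equals m times the number of zeros of q_n in R_1 counted with multiplicity. -/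
attribute [local instance] Matrix.linftyOpNormedRing
attribute [local instance] Classical.propDecidable

open Polynomial Filter Topology

attribute [local instance] Matrix.linftyOpNormedRing
attribute [local instance] Matrix.linftyOpNormedAlgebra
attribute [local instance] Classical.propDecidable



lemma exists_tuple {α : Type*} (s : Multiset α) (N : ℕ) (h : Multiset.card s = N) :
    ∃ f : Fin N → α, s = Multiset.map f Finset.univ.val := by
  have hl : s.toList.length = N := by rw [Multiset.length_toList, h]
  subst hl
  refine ⟨s.toList.get, ?_⟩
  conv_lhs => rw [← s.coe_toList, ← List.map_get_finRange s.toList]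
  rfl

lemma contProd {N : ℕ} (s : Finset (Fin N)) (j : ℕ) :
    Continuous fun f : Fin N → ℂ => (∏ i ∈ s, (X - C (f i))).coeff j := by
  induction s using Finset.induction generalizing j with
  | empty => simpa using continuous_const
  | @insert a s ha ih =>
    have hrw : ∀ (f : Fin N → ℂ),
        (∏ i ∈ insert a s, (X - C (f i))).coeff j
          = (X * ∏ i ∈ s, (X - C (f i))).coeff j - f a * (∏ i ∈ s, (X - C (f i))).coeff j := by
      intro f
      rw [Finset.prod_insert ha, sub_mul, Polynomial.coeff_sub, Polynomial.C_mul' (f a),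
        Polynomial.coeff_smul]
      rfl
    simp only [hrw]
    cases j with
    | zero =>
      simp only [Polynomial.mul_coeff_zero, Polynomial.coeff_X_zero, zero_mul]
      exact (continuous_const.sub ((continuous_apply a).mul (ih 0)))
    | succ j =>
      simp only [Polynomial.coeff_X_mul]
      exact ((ih j).sub ((continuous_apply a).mul (ih (j+1))))

/-- For `t` in the good set, `p t` factors through a root tuple. -/
lemma poly_eq_tuple_prod {p : Polynomial ℂ} {N : ℕ} {L : ℂ} {f : Fin N → ℂ}
    (hlc : p.leadingCoeff = L) (hdeg : p.natDegree = N)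
    (hroots : p.roots = Multiset.map f Finset.univ.val) :
    p = C L * ∏ i, (X - C (f i)) := by
  have hcard : p.roots.card = p.natDegree := by
    rw [hroots, hdeg]; simp
  have := Polynomial.C_leadingCoeff_mul_prod_multiset_X_sub_C hcard
  rw [← this, hlc, hroots]
  congr 1
  rw [Finset.prod_eq_multiset_prod, Multiset.map_map]
  rfl

lemma key_seq (N : ℕ) (L : ℂ) (hL : L ≠ 0) (p : ℝ → Polynomial ℂ)
    (hcoeff : ∀ j, Continuous fun t => (p t).coeff j)
    (hform : ∀ t ∈ Set.Icc (0:ℝ) 1,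
      (p t).leadingCoeff = L ∧ (p t).natDegree = N ∧ Multiset.card (p t).roots = N)
    (K₁ K₂ : Set ℂ) (h₁ : IsCompact K₁) (h₂ : IsCompact K₂) (hd : K₁ ∩ K₂ = ∅)
    (hroots : ∀ t ∈ Set.Icc (0:ℝ) 1, ∀ z ∈ (p t).roots, z ∈ K₁ ∪ K₂)
    (u : ℕ → ℝ) (t₀ : ℝ) (hu : ∀ k, u k ∈ Set.Icc (0:ℝ) 1) (ht₀ : t₀ ∈ Set.Icc (0:ℝ) 1)
    (hlim : Tendsto u atTop (𝓝 t₀)) (c : ℕ)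
    (hc : ∀ k, (p (u k)).roots.countP (· ∈ K₁) = c) :
    (p t₀).roots.countP (· ∈ K₁) = c := by
  -- choose root tuples
  have hex : ∀ k, ∃ f : Fin N → ℂ, (p (u k)).roots = Multiset.map f Finset.univ.val :=
    fun k => exists_tuple _ _ (hform _ (hu k)).2.2
  choose r hr using hex
  have hrK : ∀ k i, r k i ∈ K₁ ∪ K₂ := by
    intro k i
    refine hroots _ (hu k) _ ?_
    rw [hr k]
    exact Multiset.mem_map.2 ⟨i, by simp, rfl⟩
  -- compactness
  have hcpt : IsCompact (Set.univ.pi fun _ : Fin N => K₁ ∪ K₂) :=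
    isCompact_univ_pi fun _ => h₁.union h₂
  obtain ⟨rL, hrL, φ, hφ, hconv⟩ := hcpt.tendsto_subseq
    (x := fun k => r k) (fun k => by simp only [Set.mem_pi]; intro i _; exact hrK k i)
  have hrLK : ∀ i, rL i ∈ K₁ ∪ K₂ := fun i => hrL i (Set.mem_univ i)
  -- p t₀ = C L * ∏ (X - C (rL i))
  have hfact : ∀ k, p (u k) = C L * ∏ i, (X - C (r k i)) := fun k =>
    poly_eq_tuple_prod (hform _ (hu k)).1 (hform _ (hu k)).2.1 (hr k)
  have hpt₀ : p t₀ = C L * ∏ i, (X - C (rL i)) := by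
    ext j
    have h1 : Tendsto (fun k => (p (u (φ k))).coeff j) atTop (𝓝 ((p t₀).coeff j)) :=
      ((hcoeff j).tendsto t₀).comp (hlim.comp hφ.tendsto_atTop)
    have h2 : Tendsto (fun k => (p (u (φ k))).coeff j)
        atTop (𝓝 ((C L * ∏ i, (X - C (rL i))).coeff j)) := by
      have hG : Continuous fun f : Fin N → ℂ => (C L * ∏ i, (X - C (f i))).coeff j := by
        simp only [Polynomial.coeff_C_mul]
        exact continuous_const.mul (contProd Finset.univ j)
      have := (hG.tendsto rL).comp hconv
      simpa [Function.comp_def, hfact] using this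
    exact tendsto_nhds_unique h1 h2
  have hroots₀ : (p t₀).roots = Multiset.map rL Finset.univ.val := by
    rw [hpt₀, Polynomial.roots_C_mul _ hL]
    have : (∏ i, (X - C (rL i)))
        = (Multiset.map (fun a => X - C a) (Multiset.map rL Finset.univ.val)).prod := by
      rw [Finset.prod_eq_multiset_prod, Multiset.map_map]; rfl
    rw [this, Polynomial.roots_multiset_prod_X_sub_C]
  -- eventual membership transfer
  have hev : ∀ i : Fin N, ∀ᶠ k in atTop, (r (φ k) i ∈ K₁ ↔ rL i ∈ K₁) := by
    intro i
    have htd : Tendsto (fun k => r (φ k) i) atTop (𝓝 (rL i)) := by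
      have := tendsto_pi_nhds.1 hconv i
      simpa [Function.comp] using this
    rcases hrLK i with hK1 | hK2
    · have hnot2 : rL i ∉ K₂ := fun h => by
        have : rL i ∈ K₁ ∩ K₂ := ⟨hK1, h⟩
        simp [hd] at this
      have : ∀ᶠ k in atTop, r (φ k) i ∈ K₂ᶜ :=
        htd (h₂.isClosed.isOpen_compl.mem_nhds hnot2)
      filter_upwards [this] with k hk
      simp only [hK1, iff_true]
      rcases hrK (φ k) i with h | h
      · exact h
      · exact absurd h hk
    · have hnot1 : rL i ∉ K₁ := fun h => by
        have : rL i ∈ K₁ ∩ K₂ := ⟨h, hK2⟩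
        simp [hd] at this
      have : ∀ᶠ k in atTop, r (φ k) i ∈ K₁ᶜ :=
        htd (h₁.isClosed.isOpen_compl.mem_nhds hnot1)
      filter_upwards [this] with k hk
      simp only [hnot1, iff_false]
      exact hk
  have hall : ∀ᶠ k in atTop, ∀ i : Fin N, (r (φ k) i ∈ K₁ ↔ rL i ∈ K₁) :=
    eventually_all.2 hev
  obtain ⟨k, hk⟩ := hall.exists
  have hcount : ∀ (f : Fin N → ℂ), (Multiset.map f Finset.univ.val).countP (· ∈ K₁)
      = Multiset.card (Finset.univ.val.filter (fun i => f i ∈ K₁)) := by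
    intro f; rw [Multiset.countP_map]
  calc (p t₀).roots.countP (· ∈ K₁)
      = Multiset.card (Finset.univ.val.filter (fun i => rL i ∈ K₁)) := by
        rw [hroots₀, hcount]
    _ = Multiset.card (Finset.univ.val.filter (fun i => r (φ k) i ∈ K₁)) := by
        congr 1
        exact Multiset.filter_congr (fun i _ => (hk i).symm)
    _ = (p (u (φ k))).roots.countP (· ∈ K₁) := by rw [hr (φ k), hcount]
    _ = c := hc (φ k)

lemma count_const (N : ℕ) (L : ℂ) (hL : L ≠ 0) (p : ℝ → Polynomial ℂ)
    (hcoeff : ∀ j, Continuous fun t => (p t).coeff j)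
    (hform : ∀ t ∈ Set.Icc (0:ℝ) 1,
      (p t).leadingCoeff = L ∧ (p t).natDegree = N ∧ Multiset.card (p t).roots = N)
    (K₁ K₂ : Set ℂ) (h₁ : IsCompact K₁) (h₂ : IsCompact K₂) (hd : K₁ ∩ K₂ = ∅)
    (hroots : ∀ t ∈ Set.Icc (0:ℝ) 1, ∀ z ∈ (p t).roots, z ∈ K₁ ∪ K₂) :
    (p 1).roots.countP (· ∈ K₁) = (p 0).roots.countP (· ∈ K₁) := by
  set F : ℝ → ℕ := fun t => (p t).roots.countP (· ∈ K₁) with hF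
  have key := key_seq N L hL p hcoeff hform K₁ K₂ h₁ h₂ hd hroots
  set Agood : Set ℝ := {t | t ∈ Set.Icc (0:ℝ) 1 ∧ F t = F 0} with hA
  set Bbad : Set ℝ := {t | t ∈ Set.Icc (0:ℝ) 1 ∧ F t ≠ F 0} with hB
  have hAclosed : IsClosed Agood := by
    refine IsSeqClosed.isClosed ?_
    intro u t hu hlim
    have ht : t ∈ Set.Icc (0:ℝ) 1 := isClosed_Icc.isSeqClosed (fun k => (hu k).1) hlim
    exact ⟨ht, key u t (fun k => (hu k).1) ht hlim (F 0) (fun k => (hu k).2)⟩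
  have hBclosed : IsClosed Bbad := by
    refine IsSeqClosed.isClosed ?_
    intro u t hu hlim
    have ht : t ∈ Set.Icc (0:ℝ) 1 := isClosed_Icc.isSeqClosed (fun k => (hu k).1) hlim
    -- pigeonhole: some value c' ≠ F 0 occurs infinitely often
    have hbd : ∀ k, F (u k) < N + 1 := by
      intro k
      have h1 : F (u k) ≤ Multiset.card (p (u k)).roots := Multiset.countP_le_card _ _
      have := (hform _ (hu k).1).2.2
      omega
    have hfin := Finite.exists_infinite_fiber (fun k => (⟨F (u k), hbd k⟩ : Fin (N+1)))
    obtain ⟨⟨c', hc'⟩, hinf⟩ := hfin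
    have hfreq : ∃ᶠ k in atTop, F (u k) = c' := by
      rw [Nat.frequently_atTop_iff_infinite]
      have : ((fun k => (⟨F (u k), hbd k⟩ : Fin (N+1))) ⁻¹' {⟨c', hc'⟩}) = {k | F (u k) = c'} := by
        ext k; simp [Fin.ext_iff]
      rw [← this]
      exact Set.infinite_coe_iff.1 hinf
    obtain ⟨φ, hφ, hφc⟩ := Filter.extraction_of_frequently_atTop hfreq
    have hlim' : Tendsto (u ∘ φ) atTop (𝓝 t) := hlim.comp hφ.tendsto_atTop
    have hFt : F t = c' := key (u ∘ φ) t (fun k => (hu (φ k)).1) ht hlim' c' hφc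
    have hne : c' ≠ F 0 := by
      have := (hu (φ 0)).2
      rw [hφc 0] at this
      exact this
    exact ⟨ht, by rw [hFt]; exact hne⟩
  have hcover : Set.Icc (0:ℝ) 1 ⊆ Agood ∪ Bbad := by
    intro t ht
    by_cases h : F t = F 0
    · exact Or.inl ⟨ht, h⟩
    · exact Or.inr ⟨ht, h⟩
  have hAne : (Set.Icc (0:ℝ) 1 ∩ Agood).Nonempty :=
    ⟨0, Set.mem_Icc.2 ⟨le_refl _, zero_le_one⟩, ⟨Set.mem_Icc.2 ⟨le_refl _, zero_le_one⟩, rfl⟩⟩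
  by_cases hBne : (Set.Icc (0:ℝ) 1 ∩ Bbad).Nonempty
  · obtain ⟨t, _, ⟨_, h1⟩, ⟨_, h2⟩⟩ :=
      isPreconnected_closed_iff.1 isPreconnected_Icc Agood Bbad hAclosed hBclosed hcover hAne hBne
    exact absurd h1 h2
  · have h1 : (1:ℝ) ∈ Set.Icc (0:ℝ) 1 := Set.mem_Icc.2 ⟨zero_le_one, le_refl _⟩
    rcases hcover h1 with h | h
    · exact h.2
    · exact absurd ⟨1, h1, h⟩ hBne



lemma inclusion (n m : ℕ) (hn : 1 ≤ n) (hm : 1 ≤ m) (q : ℕ → Polynomial ℂ)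
    (hdeg : ∀ j ≤ n, (q j).degree = j) (γ : ℝ) (hγ : 0 < γ)
    (hbasis : ∀ j, 1 ≤ j → j ≤ n →
      ∃ (r : Fin j → ℂ) (α : Fin j → ℝ),
        (q j).roots = Multiset.map r Finset.univ.val ∧
        (∀ i, 0 ≤ α i) ∧ (∑ i, α i) ≤ γ ∧
        ∀ w : ℂ, (q j).eval w ≠ 0 →
          ‖(q (j - 1)).eval w / (q j).eval w‖ ≤
            ∑ i, α i / ‖w - r i‖)
    (A : ℕ → Matrix (Fin m) (Fin m) ℂ) (hAn : IsUnit (A n))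
    (ρ : ℝ) (hρ : 0 < ρ)
    (hρeq : ‖(A n)⁻¹‖⁻¹ * ρ ^ n = ∑ j ∈ Finset.range n, ‖A j‖ * ρ ^ j)
    (R : Set ℂ)
    (hball : ∀ k, 1 ≤ k → k ≤ n → ∀ r ∈ (q k).roots, Metric.closedBall r (γ*ρ) ⊆ R)
    (t : ℂ) (ht : ‖t‖ ≤ 1) (z : ℂ) (hz : z ∉ R) :
    Matrix.det ((q n).eval z • A n
      + t • ∑ j ∈ Finset.range n, (q j).eval z • A j) ≠ 0 := by
  have hγρ : 0 < γ * ρ := mul_pos hγ hρ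
  have hq0 : ∀ k, k ≤ n → q k ≠ 0 := by
    intro k hk h
    have := hdeg k hk
    rw [h, degree_zero] at this
    exact absurd this (by simp)
  have hqz : ∀ k, 1 ≤ k → k ≤ n → (q k).eval z ≠ 0 := by
    intro k h1 h2 h
    have hzr : z ∈ (q k).roots := (mem_roots (hq0 k h2)).2 h
    exact hz (hball k h1 h2 z hzr (Metric.mem_closedBall_self hγρ.le))
  have hfar : ∀ k, 1 ≤ k → k ≤ n → ∀ r ∈ (q k).roots, γ * ρ < ‖z - r‖ := by
    intro k h1 h2 r hr
    by_contra h
    push_neg at h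
    apply hz (hball k h1 h2 r hr _)
    rw [Metric.mem_closedBall, Complex.dist_eq]
    exact h
  have hstep : ∀ k, 1 ≤ k → k ≤ n →
      ‖(q (k-1)).eval z‖ * ρ < ‖(q k).eval z‖ := by
    intro k h1 h2
    obtain ⟨r, α, hroots, hα0, hαsum, hbound⟩ := hbasis k h1 h2
    have hb := hbound z (hqz k h1 h2)
    have hri : ∀ i, γ * ρ < ‖z - r i‖ := by
      intro i
      apply hfar k h1 h2
      rw [hroots]
      exact Multiset.mem_map.2 ⟨i, by simp, rfl⟩
    have hsum_lt : ∑ i, α i / ‖z - r i‖ < 1/ρ := by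
      by_cases hz0 : ∑ i, α i = 0
      · have hall : ∀ i, α i = 0 := fun i =>
          (Finset.sum_eq_zero_iff_of_nonneg (fun i _ => hα0 i)).1 hz0 i (by simp)
        have hzz : ∑ i, α i / ‖z - r i‖ = 0 :=
          Finset.sum_eq_zero fun i _ => by rw [hall i, zero_div]
        rw [hzz]
        positivity
      · have hpos : 0 < ∑ i, α i :=
          lt_of_le_of_ne (Finset.sum_nonneg fun i _ => hα0 i) (Ne.symm hz0)
        obtain ⟨i₀, -, hi₀⟩ := Finset.exists_lt_of_sum_lt (f := fun _ => (0:ℝ))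
          (by simpa using hpos)
        have hstrict : ∑ i, α i / ‖z - r i‖ < ∑ i, α i / (γ * ρ) := by
          apply Finset.sum_lt_sum
          · intro i _
            exact div_le_div_of_nonneg_left (hα0 i) hγρ (hri i).le
          · exact ⟨i₀, by simp, div_lt_div_of_pos_left hi₀ hγρ (hri i₀)⟩
        have h3 : (∑ i, α i) / (γ * ρ) ≤ γ / (γ * ρ) :=
          div_le_div_of_nonneg_right hαsum hγρ.le
        have h4 : γ / (γ * ρ) = 1 / ρ := by field_simp
        calc ∑ i, α i / ‖z - r i‖
            < ∑ i, α i / (γ * ρ) := hstrict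
          _ = (∑ i, α i) / (γ * ρ) := (Finset.sum_div _ _ _).symm
          _ ≤ γ / (γ * ρ) := h3
          _ = 1 / ρ := h4
    have hbn : 0 < ‖(q k).eval z‖ := norm_pos_iff.mpr (hqz k h1 h2)
    have hdiv : ‖(q (k-1)).eval z‖ / ‖(q k).eval z‖ < 1 / ρ := by
      rw [← norm_div]
      exact lt_of_le_of_lt hb hsum_lt
    rw [div_lt_div_iff₀ hbn hρ] at hdiv
    linarith
  have hchain : ∀ d j, j + d = n → 1 ≤ d →
      ‖(q j).eval z‖ * ρ ^ d < ‖(q n).eval z‖ := by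
    intro d
    induction d with
    | zero => omega
    | succ d ih =>
      intro j hj _
      rcases Nat.eq_zero_or_pos d with hd0 | hd1
      · subst hd0
        have hk := hstep n hn le_rfl
        have hjn : j = n - 1 := by omega
        subst hjn
        simpa [pow_one] using hk
      · have h1 : ‖(q j).eval z‖ * ρ < ‖(q (j+1)).eval z‖ := by
          have := hstep (j+1) (by omega) (by omega)
          simpa using this
        have h2 : ‖(q (j+1)).eval z‖ * ρ ^ d < ‖(q n).eval z‖ :=
          ih (j+1) (by omega) hd1
        have hρd : (0:ℝ) < ρ ^ d := pow_pos hρ d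
        calc ‖(q j).eval z‖ * ρ ^ (d+1)
            = (‖(q j).eval z‖ * ρ) * ρ ^ d := by ring
          _ < ‖(q (j+1)).eval z‖ * ρ ^ d := by
              exact mul_lt_mul_of_pos_right h1 hρd
          _ < ‖(q n).eval z‖ := h2
  have hposn : 0 < ‖(q n).eval z‖ := norm_pos_iff.mpr (hqz n hn le_rfl)
  have hone : (1 : Matrix (Fin m) (Fin m) ℂ) ≠ 0 := by
    intro h
    have := congrFun (congrFun h ⟨0, hm⟩) ⟨0, hm⟩
    simp [Matrix.one_apply_eq] at this
  have hdet : IsUnit (A n).det := (Matrix.isUnit_iff_isUnit_det _).1 hAn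
  have hmulinv : A n * (A n)⁻¹ = 1 := Matrix.mul_nonsing_inv _ hdet
  have hinvne : (A n)⁻¹ ≠ 0 := by
    intro h
    rw [h, Matrix.mul_zero] at hmulinv
    exact hone hmulinv.symm
  have hAinv_pos : 0 < ‖(A n)⁻¹‖ := norm_pos_iff.2 hinvne
  have hsum_main : ∑ j ∈ Finset.range n, ‖A j‖ * ‖(q j).eval z‖
      < ‖(A n)⁻¹‖⁻¹ * ‖(q n).eval z‖ := by
    have hEx : ∃ j ∈ Finset.range n, 0 < ‖A j‖ := by
      by_contra h
      push_neg at h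
      have hzero : ∀ j ∈ Finset.range n, ‖A j‖ * ρ ^ j = 0 := by
        intro j hj
        have : ‖A j‖ = 0 := le_antisymm (h j hj) (norm_nonneg _)
        rw [this, zero_mul]
      have : ‖(A n)⁻¹‖⁻¹ * ρ ^ n = 0 := by
        rw [hρeq]; exact Finset.sum_eq_zero hzero
      have hpos : 0 < ‖(A n)⁻¹‖⁻¹ * ρ ^ n :=
        mul_pos (inv_pos.2 hAinv_pos) (pow_pos hρ n)
      linarith
    obtain ⟨j₀, hj₀, hj₀pos⟩ := hEx
    have hterm : ∀ j ∈ Finset.range n,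
        ‖A j‖ * ‖(q j).eval z‖ * ρ ^ n
          ≤ ‖A j‖ * ρ ^ j * ‖(q n).eval z‖ := by
      intro j hj
      have hjlt : j < n := Finset.mem_range.1 hj
      have hch := hchain (n - j) j (by omega) (by omega)
      have hsplit : ρ ^ n = ρ ^ j * ρ ^ (n - j) := by
        rw [← pow_add]
        congr 1
        omega
      calc ‖A j‖ * ‖(q j).eval z‖ * ρ ^ n
          = ‖A j‖ * ρ ^ j * (‖(q j).eval z‖ * ρ ^ (n-j)) := by
            rw [hsplit]; ring
        _ ≤ ‖A j‖ * ρ ^ j * ‖(q n).eval z‖ := by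
            apply mul_le_mul_of_nonneg_left hch.le
            positivity
    have hterm_strict :
        ‖A j₀‖ * ‖(q j₀).eval z‖ * ρ ^ n
          < ‖A j₀‖ * ρ ^ j₀ * ‖(q n).eval z‖ := by
      have hjlt : j₀ < n := Finset.mem_range.1 hj₀
      have hch := hchain (n - j₀) j₀ (by omega) (by omega)
      have hsplit : ρ ^ n = ρ ^ j₀ * ρ ^ (n - j₀) := by
        rw [← pow_add]; congr 1; omega
      calc ‖A j₀‖ * ‖(q j₀).eval z‖ * ρ ^ n
          = ‖A j₀‖ * ρ ^ j₀ * (‖(q j₀).eval z‖ * ρ ^ (n-j₀)) := by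
            rw [hsplit]; ring
        _ < ‖A j₀‖ * ρ ^ j₀ * ‖(q n).eval z‖ := by
            apply mul_lt_mul_of_pos_left hch
            positivity
    have hsum2 : (∑ j ∈ Finset.range n, ‖A j‖ * ‖(q j).eval z‖) * ρ ^ n
        < (∑ j ∈ Finset.range n, ‖A j‖ * ρ ^ j) * ‖(q n).eval z‖ := by
      rw [Finset.sum_mul, Finset.sum_mul]
      exact Finset.sum_lt_sum hterm ⟨j₀, hj₀, hterm_strict⟩
    rw [← hρeq] at hsum2
    have hρn : (0:ℝ) < ρ ^ n := pow_pos hρ n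
    have : (∑ j ∈ Finset.range n, ‖A j‖ * ‖(q j).eval z‖) * ρ ^ n
        < (‖(A n)⁻¹‖⁻¹ * ‖(q n).eval z‖) * ρ ^ n := by
      calc (∑ j ∈ Finset.range n, ‖A j‖ * ‖(q j).eval z‖) * ρ ^ n
          < ‖(A n)⁻¹‖⁻¹ * ρ ^ n * ‖(q n).eval z‖ := hsum2
        _ = (‖(A n)⁻¹‖⁻¹ * ‖(q n).eval z‖) * ρ ^ n := by ring
    exact lt_of_mul_lt_mul_right this hρn.le
  -- matrix part
  set gz : ℂ := (q n).eval z with hgz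
  have hgzne : gz ≠ 0 := hqz n hn le_rfl
  set W : Matrix (Fin m) (Fin m) ℂ := ∑ j ∈ Finset.range n, (q j).eval z • A j with hWdef
  have hW : ‖W‖ ≤ ∑ j ∈ Finset.range n, ‖A j‖ * ‖(q j).eval z‖ := by
    calc ‖W‖ ≤ ∑ j ∈ Finset.range n, ‖(q j).eval z • A j‖ := norm_sum_le _ _
      _ ≤ ∑ j ∈ Finset.range n, ‖A j‖ * ‖(q j).eval z‖ := by
          apply Finset.sum_le_sum
          intro j _
          calc ‖(q j).eval z • A j‖ ≤ ‖(q j).eval z‖ * ‖A j‖ := norm_smul_le _ _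
            _ = ‖A j‖ * ‖(q j).eval z‖ := by
                ring
  set E : Matrix (Fin m) (Fin m) ℂ := (t * gz⁻¹) • ((A n)⁻¹ * W) with hEdef
  have hE : ‖E‖ < 1 := by
    have h1 : ‖E‖ ≤ ‖t * gz⁻¹‖ * (‖(A n)⁻¹‖ * ‖W‖) := by
      calc ‖E‖ ≤ ‖t * gz⁻¹‖ * ‖(A n)⁻¹ * W‖ := norm_smul_le _ _
        _ ≤ ‖t * gz⁻¹‖ * (‖(A n)⁻¹‖ * ‖W‖) := by
            apply mul_le_mul_of_nonneg_left (norm_mul_le _ _) (norm_nonneg _)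
        _ = ‖t * gz⁻¹‖ * (‖(A n)⁻¹‖ * ‖W‖) := by
            rfl
    have habs : ‖t * gz⁻¹‖ ≤ (‖gz‖)⁻¹ := by
      rw [norm_mul, norm_inv]
      calc ‖t‖ * (‖gz‖)⁻¹ ≤ 1 * (‖gz‖)⁻¹ := by
            apply mul_le_mul_of_nonneg_right ht
            positivity
        _ = (‖gz‖)⁻¹ := one_mul _
    have h2 : ‖(A n)⁻¹‖ * ‖W‖ < ‖(A n)⁻¹‖ * (‖(A n)⁻¹‖⁻¹ * ‖gz‖) := by
      apply mul_lt_mul_of_pos_left _ hAinv_pos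
      exact lt_of_le_of_lt hW hsum_main
    have h3 : ‖(A n)⁻¹‖ * (‖(A n)⁻¹‖⁻¹ * ‖gz‖) = ‖gz‖ :=
      mul_inv_cancel_left₀ hAinv_pos.ne' _
    have hgzpos : 0 < ‖gz‖ := norm_pos_iff.mpr hgzne
    calc ‖E‖ ≤ ‖t * gz⁻¹‖ * (‖(A n)⁻¹‖ * ‖W‖) := h1
      _ ≤ (‖gz‖)⁻¹ * (‖(A n)⁻¹‖ * ‖W‖) := by
          apply mul_le_mul_of_nonneg_right habs
          positivity
      _ < (‖gz‖)⁻¹ * ‖gz‖ := by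
          rw [← h3]
          apply mul_lt_mul_of_pos_left h2
          positivity
      _ = 1 := inv_mul_cancel₀ hgzpos.ne'
  haveI : CompleteSpace (Matrix (Fin m) (Fin m) ℂ) := FiniteDimensional.complete ℂ _
  have hunit : IsUnit ((1 : Matrix (Fin m) (Fin m) ℂ) + E) := by
    have hnE : ‖-E‖ < 1 := by rwa [norm_neg]
    refine ⟨Units.oneSub (-E) hnE, ?_⟩
    simp [Units.oneSub, sub_neg_eq_add]
  have hfact : gz • A n + t • W = gz • (A n * (1 + E)) := by
    have h1 : A n * E = (t * gz⁻¹) • W := by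
      rw [hEdef, Matrix.mul_smul, ← Matrix.mul_assoc, hmulinv, Matrix.one_mul]
    rw [Matrix.mul_add, Matrix.mul_one, smul_add, h1, smul_smul]
    congr 1
    rw [show gz * (t * gz⁻¹) = t by field_simp]
  rw [hfact, Matrix.det_smul, Matrix.det_mul]
  apply mul_ne_zero
  · apply pow_ne_zero _ hgzne
  · apply mul_ne_zero hdet.ne_zero
    exact ((Matrix.isUnit_iff_isUnit_det _).1 hunit).ne_zero


lemma det_coeff_top {m n : ℕ} (M : Matrix (Fin m) (Fin m) (Polynomial ℂ))
    (lc : ℂ) (B : Matrix (Fin m) (Fin m) ℂ)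
    (h1 : ∀ i j, (M i j).natDegree ≤ n)
    (h2 : ∀ i j, (M i j).coeff n = lc * B i j) :
    M.det.coeff (m * n) = lc ^ m * B.det ∧ M.det.natDegree ≤ m * n := by
  rw [Matrix.det_apply', Matrix.det_apply']
  constructor
  · rw [Polynomial.finset_sum_coeff]
    have hterm : ∀ σ : Equiv.Perm (Fin m),
        ((Equiv.Perm.sign σ : ℤ) * ∏ i, M (σ i) i : Polynomial ℂ).coeff (m * n)
          = (Equiv.Perm.sign σ : ℤ) * (lc ^ m * ∏ i, B (σ i) i) := by
      intro σ
      have hcast : ((Equiv.Perm.sign σ : ℤ) : Polynomial ℂ)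
          = C ((Equiv.Perm.sign σ : ℤ) : ℂ) := by
        push_cast
        rfl
      rw [hcast, Polynomial.coeff_C_mul]
      have hcard : (Finset.univ : Finset (Fin m)).card = m := by simp
      have := Polynomial.coeff_prod_of_natDegree_le Finset.univ (fun i => M (σ i) i) n
        (fun i _ => h1 (σ i) i)
      rw [hcard] at this
      rw [this]
      have : ∏ i, (M (σ i) i).coeff n = lc ^ m * ∏ i, B (σ i) i := by
        rw [Finset.prod_congr rfl (fun i _ => h2 (σ i) i), Finset.prod_mul_distrib]
        congr 1
        rw [Finset.prod_const, hcard]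
      rw [this]
    rw [Finset.sum_congr rfl (fun σ _ => hterm σ)]
    rw [Finset.mul_sum]
    congr 1
    ext σ
    push_cast
    ring
  · apply Polynomial.natDegree_sum_le_of_forall_le
    intro σ _
    calc ((Equiv.Perm.sign σ : ℤ) * ∏ i, M (σ i) i : Polynomial ℂ).natDegree
        ≤ ((Equiv.Perm.sign σ : ℤ) : Polynomial ℂ).natDegree
            + (∏ i, M (σ i) i).natDegree := Polynomial.natDegree_mul_le
      _ ≤ 0 + (∏ i, M (σ i) i).natDegree := by
          have : ((Equiv.Perm.sign σ : ℤ) : Polynomial ℂ).natDegree = 0 := by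
            have : ((Equiv.Perm.sign σ : ℤ) : Polynomial ℂ)
                = C ((Equiv.Perm.sign σ : ℤ) : ℂ) := by push_cast; rfl
            rw [this, Polynomial.natDegree_C]
          omega
      _ = (∏ i, M (σ i) i).natDegree := by omega
      _ ≤ ∑ i, (M (σ i) i).natDegree := Polynomial.natDegree_prod_le _ _
      _ ≤ ∑ _i : Fin m, n := Finset.sum_le_sum (fun i _ => h1 (σ i) i)
      _ = m * n := by simp [Finset.sum_const, mul_comm]



/-- Counting part of the main theorem: with the ratio condition on the basis
`q 0, …, q n`, `A n` invertible, and `ρ > 0` the positive root of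
`‖(A n)⁻¹‖⁻¹ ρ^n = ∑_{j<n} ‖A j‖ ρ^j`, if the union `R` of the closed disks
of radius `γρ` about the roots of `q 1, …, q n` splits as a disjoint union of
two nonempty parts `R₁`, `R₂`, each a union of some of these disks, then the
number of zeros of `det P` in `R₁` (with multiplicity), where
`P(z) = ∑_{j≤n} A j q j (z)`, equals `m` times the number of zeros of `q n`
in `R₁` (with multiplicity). -/
theorem main_counting (n : ℕ) (hn : 1 ≤ n) (q : ℕ → Polynomial ℂ)
    (hdeg : ∀ j ≤ n, (q j).degree = j) (γ : ℝ) (hγ : 0 < γ)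
    (hbasis : ∀ j, 1 ≤ j → j ≤ n →
      ∃ (r : Fin j → ℂ) (α : Fin j → ℝ),
        (q j).roots = Multiset.map r Finset.univ.val ∧
        (∀ i, 0 ≤ α i) ∧ (∑ i, α i) ≤ γ ∧
        ∀ w : ℂ, (q j).eval w ≠ 0 →
          ‖(q (j - 1)).eval w / (q j).eval w‖ ≤
            ∑ i, α i / ‖w - r i‖)
    (m : ℕ) (A : ℕ → Matrix (Fin m) (Fin m) ℂ) (hAn : IsUnit (A n))
    (ρ : ℝ) (hρ : 0 < ρ)
    (hρeq : ‖(A n)⁻¹‖⁻¹ * ρ ^ n = ∑ j ∈ Finset.range n, ‖A j‖ * ρ ^ j)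
    (S₁ S₂ : Set ℂ)
    (hS : S₁ ∪ S₂ = {r : ℂ | ∃ k, 1 ≤ k ∧ k ≤ n ∧ r ∈ (q k).roots})
    (hS₁ : S₁.Nonempty) (hS₂ : S₂.Nonempty)
    (R₁ R₂ : Set ℂ)
    (hR₁ : R₁ = ⋃ r ∈ S₁, Metric.closedBall r (γ * ρ))
    (hR₂ : R₂ = ⋃ r ∈ S₂, Metric.closedBall r (γ * ρ))
    (hdisj : R₁ ∩ R₂ = ∅) :
    ((∑ j ∈ Finset.range (n + 1),
        q j • (A j).map Polynomial.C).det).roots.countP (fun x => x ∈ R₁) =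
      m * ((q n).roots.countP fun x => x ∈ R₁) := by
  rcases Nat.eq_zero_or_pos m with hm0 | hm
  · subst hm0
    rw [Matrix.det_isEmpty]
    simp
  -- notation
  set M₁ : Matrix (Fin m) (Fin m) (Polynomial ℂ) := q n • (A n).map Polynomial.C with hM₁
  set M₂ : Matrix (Fin m) (Fin m) (Polynomial ℂ) :=
    ∑ j ∈ Finset.range n, q j • (A j).map Polynomial.C with hM₂
  have hnatdeg : ∀ j ≤ n, (q j).natDegree = j := fun j hj =>
    natDegree_eq_of_degree_eq_some (hdeg j hj)
  have hq0 : ∀ k, k ≤ n → q k ≠ 0 := by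
    intro k hk h
    have := hdeg k hk
    rw [h, degree_zero] at this
    exact absurd this (by simp)
  set lc : ℂ := (q n).coeff n with hlcdef
  have hlc : lc ≠ 0 := by
    have : lc = (q n).leadingCoeff := by
      rw [hlcdef, Polynomial.leadingCoeff, hnatdeg n le_rfl]
    rw [this]
    exact leadingCoeff_ne_zero.2 (hq0 n le_rfl)
  have hdetAn : IsUnit (A n).det := (Matrix.isUnit_iff_isUnit_det _).1 hAn
  set L : ℂ := lc ^ m * (A n).det with hLdef
  have hL : L ≠ 0 := mul_ne_zero (pow_ne_zero _ hlc) hdetAn.ne_zero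
  -- entries
  have hentry : ∀ (s : ℂ) (i j : Fin m), (M₁ + Polynomial.C s • M₂) i j
      = q n * Polynomial.C (A n i j)
        + Polynomial.C s * ∑ k ∈ Finset.range n, q k * Polynomial.C (A k i j) := by
    intro s i j
    simp only [Matrix.add_apply, Matrix.smul_apply, hM₁, hM₂, Matrix.sum_apply,
      Matrix.map_apply, smul_eq_mul, Finset.mul_sum]
  have hentry_deg : ∀ (s : ℂ) (i j : Fin m), ((M₁ + Polynomial.C s • M₂) i j).natDegree ≤ n := by
    intro s i j
    rw [hentry]
    apply le_trans (Polynomial.natDegree_add_le _ _)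
    apply max_le
    · apply le_trans Polynomial.natDegree_mul_le
      rw [hnatdeg n le_rfl, Polynomial.natDegree_C]
      omega
    · apply le_trans Polynomial.natDegree_mul_le
      rw [Polynomial.natDegree_C]
      simp only [zero_add]
      apply Polynomial.natDegree_sum_le_of_forall_le
      intro k hk
      apply le_trans Polynomial.natDegree_mul_le
      rw [hnatdeg k (Finset.mem_range.1 hk).le, Polynomial.natDegree_C]
      have := Finset.mem_range.1 hk
      omega
  have hentry_coeff : ∀ (s : ℂ) (i j : Fin m),
      ((M₁ + Polynomial.C s • M₂) i j).coeff n = lc * A n i j := by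
    intro s i j
    rw [hentry, Polynomial.coeff_add, Polynomial.coeff_mul_C, Polynomial.coeff_C_mul,
      Polynomial.finset_sum_coeff]
    have hz : ∀ k ∈ Finset.range n, (q k * Polynomial.C (A k i j)).coeff n = 0 := by
      intro k hk
      rw [Polynomial.coeff_mul_C]
      have : (q k).coeff n = 0 := by
        apply Polynomial.coeff_eq_zero_of_natDegree_lt
        rw [hnatdeg k (Finset.mem_range.1 hk).le]
        exact Finset.mem_range.1 hk
      rw [this, zero_mul]
    rw [Finset.sum_eq_zero hz, mul_zero, add_zero]
  have hform0 : ∀ s : ℂ, ((M₁ + Polynomial.C s • M₂).det).coeff (m * n) = L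
      ∧ ((M₁ + Polynomial.C s • M₂).det).natDegree ≤ m * n := by
    intro s
    have := det_coeff_top (M₁ + Polynomial.C s • M₂) lc (A n)
      (hentry_deg s) (hentry_coeff s)
    exact this
  set p : ℝ → Polynomial ℂ := fun t => (M₁ + Polynomial.C (t:ℂ) • M₂).det with hp
  have hpdeg : ∀ t : ℝ, (p t).natDegree = m * n := by
    intro t
    refine le_antisymm (hform0 _).2 (le_natDegree_of_ne_zero ?_)
    rw [(hform0 ((t:ℝ):ℂ)).1]
    exact hL
  have hplc : ∀ t : ℝ, (p t).leadingCoeff = L := by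
    intro t
    rw [Polynomial.leadingCoeff, hpdeg t]
    exact (hform0 _).1
  have hproots_card : ∀ t : ℝ, Multiset.card (p t).roots = m * n := by
    intro t
    have := (Polynomial.splits_iff_card_roots (f := p t)).1
      (IsAlgClosed.splits (p t))
    rw [this, hpdeg]
  -- two-variable determinant for coefficient continuity
  set D : Polynomial (Polynomial ℂ) :=
    (Matrix.of fun i j => Polynomial.C (M₁ i j) + Polynomial.X * Polynomial.C (M₂ i j)).det
    with hD
  have hpD : ∀ s : ℂ, (M₁ + Polynomial.C s • M₂).det = Polynomial.eval (Polynomial.C s) D := by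
    intro s
    have hmap := RingHom.map_det (Polynomial.evalRingHom (Polynomial.C s))
      (Matrix.of fun i j => Polynomial.C (M₁ i j) + Polynomial.X * Polynomial.C (M₂ i j))
    have hMM : (Polynomial.evalRingHom (Polynomial.C s)).mapMatrix
        (Matrix.of fun i j => Polynomial.C (M₁ i j) + Polynomial.X * Polynomial.C (M₂ i j))
        = M₁ + Polynomial.C s • M₂ := by
      apply Matrix.ext
      intro i j
      simp only [RingHom.mapMatrix_apply, Matrix.map_apply, Matrix.of_apply,
        Polynomial.coe_evalRingHom, Polynomial.eval_add, Polynomial.eval_mul,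
        Polynomial.eval_C, Polynomial.eval_X, Matrix.add_apply, Matrix.smul_apply,
        smul_eq_mul]
    rw [← hMM, ← hmap]
    rfl
  have hcoeff : ∀ jj : ℕ, Continuous fun t : ℝ => (p t).coeff jj := by
    intro jj
    have hfun : (fun t : ℝ => (p t).coeff jj)
        = fun t : ℝ => ∑ i ∈ Finset.range (D.natDegree + 1),
            (D.coeff i).coeff jj * ((t:ℂ)) ^ i := by
      funext t
      rw [hp]
      simp only
      rw [hpD, Polynomial.eval_eq_sum_range, Polynomial.finset_sum_coeff]
      apply Finset.sum_congr rfl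
      intro i _
      rw [← Polynomial.C_pow, Polynomial.coeff_mul_C]
    rw [hfun]
    apply continuous_finset_sum
    intro i _
    exact continuous_const.mul (Complex.continuous_ofReal.pow i)
  -- inclusion of roots
  have hball : ∀ k, 1 ≤ k → k ≤ n → ∀ r ∈ (q k).roots,
      Metric.closedBall r (γ * ρ) ⊆ R₁ ∪ R₂ := by
    intro k h1 h2 r hr
    have hrS : r ∈ S₁ ∪ S₂ := by
      rw [hS]
      exact ⟨k, h1, h2, hr⟩
    rcases hrS with h | h
    · refine subset_trans ?_ Set.subset_union_left
      rw [hR₁]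
      exact Set.subset_biUnion_of_mem (u := fun r => Metric.closedBall r (γ * ρ)) h
    · refine subset_trans ?_ Set.subset_union_right
      rw [hR₂]
      exact Set.subset_biUnion_of_mem (u := fun r => Metric.closedBall r (γ * ρ)) h
  have hroots : ∀ t ∈ Set.Icc (0:ℝ) 1, ∀ z ∈ (p t).roots, z ∈ R₁ ∪ R₂ := by
    intro t ht z hz
    by_contra hzR
    have heval : (p t).eval z = 0 := (Polynomial.mem_roots'.1 hz).2
    have hmap := RingHom.map_det (Polynomial.evalRingHom z) (M₁ + Polynomial.C (t:ℂ) • M₂)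
    have hMM : (Polynomial.evalRingHom z).mapMatrix (M₁ + Polynomial.C (t:ℂ) • M₂)
        = (q n).eval z • A n + ((t:ℂ)) • ∑ j ∈ Finset.range n, (q j).eval z • A j := by
      ext i j
      rw [RingHom.mapMatrix_apply, Matrix.map_apply, hentry]
      simp [Matrix.add_apply, Matrix.smul_apply, Matrix.sum_apply, smul_eq_mul,
        Polynomial.eval_finset_sum, Finset.mul_sum]
    have hne := inclusion n m hn hm q hdeg γ hγ hbasis A hAn ρ hρ hρeq (R₁ ∪ R₂) hball
      ((t:ℂ)) (by rw [Complex.norm_of_nonneg ht.1]; exact ht.2) z hzR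
    apply hne
    rw [← hMM, ← hmap]
    simpa using heval
  -- compactness
  have hSfin : (S₁ ∪ S₂).Finite := by
    rw [hS]
    apply Set.Finite.subset
      (Set.Finite.biUnion (Finset.range (n+1)).finite_toSet
        (fun k _ => (q k).roots.toFinset.finite_toSet))
    rintro r ⟨k, h1, h2, hr⟩
    refine Set.mem_biUnion (show k ∈ ↑(Finset.range (n+1)) from
      Finset.mem_coe.2 (Finset.mem_range.2 (by omega))) ?_
    exact Finset.mem_coe.2 (Multiset.mem_toFinset.2 hr)
  have hK1 : IsCompact R₁ := by
    rw [hR₁]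
    exact Set.Finite.isCompact_biUnion (hSfin.subset Set.subset_union_left)
      (fun r _ => isCompact_closedBall r _)
  have hK2 : IsCompact R₂ := by
    rw [hR₂]
    exact Set.Finite.isCompact_biUnion (hSfin.subset Set.subset_union_right)
      (fun r _ => isCompact_closedBall r _)
  -- main counting
  have hform : ∀ t ∈ Set.Icc (0:ℝ) 1,
      (p t).leadingCoeff = L ∧ (p t).natDegree = m * n
        ∧ Multiset.card (p t).roots = m * n := fun t _ =>
    ⟨hplc t, hpdeg t, hproots_card t⟩
  have hmain := count_const (m * n) L hL p hcoeff hform R₁ R₂ hK1 hK2 hdisj hroots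
  have hp1 : p 1 = (∑ j ∈ Finset.range (n + 1), q j • (A j).map Polynomial.C).det := by
    rw [hp]
    simp only [Complex.ofReal_one, Polynomial.C_1, one_smul]
    congr 1
    rw [Finset.sum_range_succ]
    rw [add_comm]
  have hp0roots : (p 0).roots = m • (q n).roots := by
    have hp0 : p 0 = Polynomial.C ((A n).det) * (q n) ^ m := by
      rw [hp]
      simp only [Complex.ofReal_zero, Polynomial.C_0, zero_smul, add_zero]
      rw [hM₁, Matrix.det_smul, Fintype.card_fin]
      have : ((A n).map Polynomial.C).det = Polynomial.C ((A n).det) := by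
        rw [RingHom.map_det]
        rfl
      rw [this, mul_comm]
    rw [hp0, Polynomial.roots_C_mul _ hdetAn.ne_zero, Polynomial.roots_pow]
  rw [← hp1, hmain, hp0roots, Multiset.countP_nsmul]
end

section
/- Let a_1, …, a_n be complex numbers (n ≥ 1), and define the Newton basis polynomials q_0(z) = 1 and q_j(z) = (z − a_1)(z − a_2)⋯(z − a_j) for 1 ≤ j ≤ n. Let A_0, …, A_n be m×m complex matrices with A_n invertible, and let z be a complex number with det(A_n q_n(z) + A_{n−1} q_{n−1}(z) + ⋯ + A_0 q_0(z)) = 0. Set d = min_{1 ≤ i ≤ n} |z − a_i|. Then ‖A_n^{-1}‖^{-1} d^n ≤ Σ_{j=0}^{n−1} ‖A_j‖ d^j, where ‖·‖ denotes the L∞ operator norm on m×m complex matrices (the maximum absolute row-sum norm, i.e., the operator norm induced by the sup norm on ℂ^m). Equivalently, z lies in the union of the closed disks {w : |w − a_i| ≤ ρ}, 1 ≤ i ≤ n, where ρ is any positive number with ‖A_n^{-1}‖^{-1} ρ^n = Σ_{j=0}^{n−1} ‖A_j‖ ρ^j. -/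
attribute [local instance] Matrix.linftyOpNormedRing

open scoped Matrix

attribute [local instance] Matrix.linftyOpNormedAlgebra Matrix.linftyOpIsBoundedSMul

theorem aux_inv_pos (m : ℕ) (hm : 0 < m) (M : Matrix (Fin m) (Fin m) ℂ)
    (hM : IsUnit M) : 0 < ‖M⁻¹‖ := by
  haveI : Nonempty (Fin m) := ⟨⟨0, hm⟩⟩
  have hinv : M⁻¹ * M = 1 := Matrix.nonsing_inv_mul _ ((Matrix.isUnit_iff_isUnit_det _).mp hM)
  refine norm_pos_iff.mpr fun h0 => ?_
  have h1 : (1 : Matrix (Fin m) (Fin m) ℂ) = 0 := by rw [← hinv, h0, zero_mul]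
  exact one_ne_zero h1

theorem aux_singular (m : ℕ) (hm : 0 < m) (M R : Matrix (Fin m) (Fin m) ℂ)
    (hM : IsUnit M) (c : ℂ) (hc : c ≠ 0) (h : (c • M + R).det = 0) :
    ‖M⁻¹‖⁻¹ * ‖c‖ ≤ ‖R‖ := by
  haveI : Nonempty (Fin m) := ⟨⟨0, hm⟩⟩
  have hinv : M⁻¹ * M = 1 := Matrix.nonsing_inv_mul _ ((Matrix.isUnit_iff_isUnit_det _).mp hM)
  have hMpos : 0 < ‖M⁻¹‖ := aux_inv_pos m hm M hM
  obtain ⟨v, hv0, hv⟩ := (Matrix.exists_mulVec_eq_zero_iff).mpr h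
  have hMv : M *ᵥ v = (-c⁻¹) • (R *ᵥ v) := by
    have h1 : c • (M *ᵥ v) + R *ᵥ v = 0 := by
      rw [← Matrix.smul_mulVec, ← Matrix.add_mulVec, hv]
    have h2 : c • (M *ᵥ v) = -(R *ᵥ v) := by linear_combination (norm := module) h1
    rw [neg_smul, ← smul_neg, ← h2, inv_smul_smul₀ hc]
  have hvv : v = M⁻¹ *ᵥ (M *ᵥ v) := by
    rw [Matrix.mulVec_mulVec, hinv, Matrix.one_mulVec]
  have hvpos : 0 < ‖v‖ := norm_pos_iff.mpr hv0
  have habs : 0 < ‖c‖ := norm_pos_iff.mpr hc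
  have key : ‖v‖ ≤ ‖M⁻¹‖ * ((‖c‖)⁻¹ * (‖R‖ * ‖v‖)) := by
    calc ‖v‖ = ‖M⁻¹ *ᵥ ((-c⁻¹) • (R *ᵥ v))‖ := by rw [← hMv, ← hvv]
    _ ≤ ‖M⁻¹‖ * ‖(-c⁻¹) • (R *ᵥ v)‖ := Matrix.linfty_opNorm_mulVec _ _
    _ = ‖M⁻¹‖ * ((‖c‖)⁻¹ * ‖R *ᵥ v‖) := by
        rw [norm_smul, norm_neg, norm_inv]
    _ ≤ ‖M⁻¹‖ * ((‖c‖)⁻¹ * (‖R‖ * ‖v‖)) := by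
        gcongr
        exact Matrix.linfty_opNorm_mulVec _ _
  have key2 : ‖c‖ * ‖v‖ ≤ ‖M⁻¹‖ * ‖R‖ * ‖v‖ := by
    calc ‖c‖ * ‖v‖
        ≤ ‖c‖ * (‖M⁻¹‖ * ((‖c‖)⁻¹ * (‖R‖ * ‖v‖))) :=
          mul_le_mul_of_nonneg_left key habs.le
    _ = ‖M⁻¹‖ * ‖R‖ * ‖v‖ := by field_simp
  have key3 : ‖c‖ ≤ ‖M⁻¹‖ * ‖R‖ := le_of_mul_le_mul_right key2 hvpos
  rw [inv_mul_le_iff₀ hMpos]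
  exact key3

/-- The main theorem specialized to the Newton basis with nodes
`a 0, …, a (n-1)`, i.e. `q j (z) = ∏_{i<j} (z - a i)`: if `A n` is invertible
and `det (∑_{j≤n} A j q j (z)) = 0`, then with `d = min_{i<n} |z - a i|` one
has `‖(A n)⁻¹‖⁻¹ d^n ≤ ∑_{j<n} ‖A j‖ d^j` (L∞ operator norm); equivalently,
`z` lies within distance `ρ` of some node, where `ρ` is any positive root of
`‖(A n)⁻¹‖⁻¹ ρ^n = ∑_{j<n} ‖A j‖ ρ^j`. -/
theorem newton_basis_inclusion (m n : ℕ) (hn : 1 ≤ n) (a : ℕ → ℂ)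
    (A : ℕ → Matrix (Fin m) (Fin m) ℂ) (hAn : IsUnit (A n)) (z : ℂ)
    (hz : (∑ j ∈ Finset.range (n + 1),
      (∏ i ∈ Finset.range j, (z - a i)) • A j).det = 0)
    (d : ℝ)
    (hd : IsLeast {x : ℝ | ∃ i < n, x = ‖z - a i‖} d) :
    ‖(A n)⁻¹‖⁻¹ * d ^ n ≤ ∑ j ∈ Finset.range n, ‖A j‖ * d ^ j ∧
    ∀ ρ : ℝ, 0 < ρ →
      ‖(A n)⁻¹‖⁻¹ * ρ ^ n = ∑ j ∈ Finset.range n, ‖A j‖ * ρ ^ j →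
      ∃ i < n, ‖z - a i‖ ≤ ρ := by
  rcases Nat.eq_zero_or_pos m with rfl | hm
  · exfalso
    simp [Matrix.det_isEmpty] at hz
  obtain ⟨⟨i0, hi0, hdi0⟩, hlb⟩ := hd
  have hd0 : 0 ≤ d := hdi0 ▸ norm_nonneg _
  have hdle : ∀ i < n, d ≤ ‖z - a i‖ := fun i hi => hlb ⟨i, hi, rfl⟩
  have main : ‖(A n)⁻¹‖⁻¹ * d ^ n ≤ ∑ j ∈ Finset.range n, ‖A j‖ * d ^ j := by
    rcases eq_or_lt_of_le hd0 with hd0' | hdpos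
    · have hlhs : ‖(A n)⁻¹‖⁻¹ * d ^ n = 0 := by
        rw [← hd0', zero_pow (by omega : n ≠ 0), mul_zero]
      rw [hlhs]
      refine Finset.sum_nonneg fun j _ => mul_nonneg (norm_nonneg _) ?_
      rw [← hd0']
      positivity
    · -- d > 0
      have hqn_ne : (∏ i ∈ Finset.range n, (z - a i)) ≠ 0 := by
        rw [Finset.prod_ne_zero_iff]
        intro i hi h0
        have := hdle i (Finset.mem_range.mp hi)
        rw [h0] at this
        simp at this
        linarith
      have hz' : ((∏ i ∈ Finset.range n, (z - a i)) • A n +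
          ∑ j ∈ Finset.range n, (∏ i ∈ Finset.range j, (z - a i)) • A j).det = 0 := by
        rw [← hz]
        congr 1
        rw [Finset.sum_range_succ, add_comm]
      have hkey := aux_singular m hm (A n)
        (∑ j ∈ Finset.range n, (∏ i ∈ Finset.range j, (z - a i)) • A j) hAn _ hqn_ne hz'
      have hRle : ‖∑ j ∈ Finset.range n, (∏ i ∈ Finset.range j, (z - a i)) • A j‖ ≤
          ∑ j ∈ Finset.range n, ‖∏ i ∈ Finset.range j, (z - a i)‖ * ‖A j‖ := by
        refine (norm_sum_le _ _).trans (le_of_eq (Finset.sum_congr rfl fun j _ => ?_))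
        rw [norm_smul]
      have habs_q : ∀ j, ‖∏ i ∈ Finset.range j, (z - a i)‖ =
          ∏ i ∈ Finset.range j, ‖z - a i‖ := fun j => norm_prod _ _
      have hcross : ∀ j < n, ‖∏ i ∈ Finset.range j, (z - a i)‖ * d ^ n ≤
          d ^ j * ‖∏ i ∈ Finset.range n, (z - a i)‖ := by
        intro j hj
        rw [habs_q, habs_q]
        have hsplit : (∏ i ∈ Finset.range n, ‖z - a i‖) =
            (∏ i ∈ Finset.range j, ‖z - a i‖) *
            ∏ i ∈ Finset.Ico j n, ‖z - a i‖ :=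
          (Finset.prod_range_mul_prod_Ico _ hj.le).symm
        have hpow : d ^ (n - j) ≤ ∏ i ∈ Finset.Ico j n, ‖z - a i‖ := by
          calc d ^ (n - j) = ∏ _i ∈ Finset.Ico j n, d := by
                rw [Finset.prod_const, Nat.card_Ico]
          _ ≤ _ := Finset.prod_le_prod (fun i _ => hd0)
                (fun i hi => hdle i (Finset.mem_Ico.mp hi).2)
        have hdn : d ^ n = d ^ j * d ^ (n - j) := by rw [← pow_add]; congr 1; omega
        have hq0 : (0:ℝ) ≤ ∏ i ∈ Finset.range j, ‖z - a i‖ :=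
          Finset.prod_nonneg fun i _ => norm_nonneg _
        rw [hsplit, hdn]
        calc (∏ i ∈ Finset.range j, ‖z - a i‖) * (d ^ j * d ^ (n - j))
            = d ^ j * ((∏ i ∈ Finset.range j, ‖z - a i‖) * d ^ (n - j)) := by ring
        _ ≤ d ^ j * ((∏ i ∈ Finset.range j, ‖z - a i‖) *
              ∏ i ∈ Finset.Ico j n, ‖z - a i‖) :=
            mul_le_mul_of_nonneg_left (mul_le_mul_of_nonneg_left hpow hq0) (pow_nonneg hd0 j)
      have hqn_pos : 0 < ‖∏ i ∈ Finset.range n, (z - a i)‖ :=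
        norm_pos_iff.mpr hqn_ne
      have step : (‖(A n)⁻¹‖⁻¹ * d ^ n) * ‖∏ i ∈ Finset.range n, (z - a i)‖ ≤
          (∑ j ∈ Finset.range n, ‖A j‖ * d ^ j) *
            ‖∏ i ∈ Finset.range n, (z - a i)‖ := by
        calc (‖(A n)⁻¹‖⁻¹ * d ^ n) * ‖∏ i ∈ Finset.range n, (z - a i)‖
            = (‖(A n)⁻¹‖⁻¹ * ‖∏ i ∈ Finset.range n, (z - a i)‖) * d ^ n := by ring
        _ ≤ ‖∑ j ∈ Finset.range n, (∏ i ∈ Finset.range j, (z - a i)) • A j‖ * d ^ n :=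
            mul_le_mul_of_nonneg_right hkey (pow_nonneg hd0 n)
        _ ≤ (∑ j ∈ Finset.range n, ‖∏ i ∈ Finset.range j, (z - a i)‖ * ‖A j‖)
              * d ^ n := mul_le_mul_of_nonneg_right hRle (pow_nonneg hd0 n)
        _ = ∑ j ∈ Finset.range n,
              ‖A j‖ * (‖∏ i ∈ Finset.range j, (z - a i)‖ * d ^ n) := by
            rw [Finset.sum_mul]; exact Finset.sum_congr rfl fun j _ => by ring
        _ ≤ ∑ j ∈ Finset.range n,
              ‖A j‖ * (d ^ j * ‖∏ i ∈ Finset.range n, (z - a i)‖) :=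
            Finset.sum_le_sum fun j hj => mul_le_mul_of_nonneg_left
              (hcross j (Finset.mem_range.mp hj)) (norm_nonneg _)
        _ = (∑ j ∈ Finset.range n, ‖A j‖ * d ^ j) *
              ‖∏ i ∈ Finset.range n, (z - a i)‖ := by
            rw [Finset.sum_mul]; exact Finset.sum_congr rfl fun j _ => by ring
      exact le_of_mul_le_mul_right step hqn_pos
  refine ⟨main, fun ρ hρ heq => ?_⟩
  suffices hdρ : d ≤ ρ by
    exact ⟨i0, hi0, by rw [← hdi0]; exact hdρ⟩
  by_contra hcon
  push_neg at hcon
  have hc := aux_inv_pos m hm (A n) hAn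
  have hcpos : 0 < ‖(A n)⁻¹‖⁻¹ := inv_pos.mpr hc
  have hex : ∃ j0 ∈ Finset.range n, 0 < ‖A j0‖ := by
    by_contra hall
    push_neg at hall
    have hzero : ∑ j ∈ Finset.range n, ‖A j‖ * ρ ^ j = 0 :=
      Finset.sum_eq_zero fun j hj => by
        rw [le_antisymm (hall j hj) (norm_nonneg _), zero_mul]
    have := mul_pos hcpos (pow_pos hρ n)
    rw [heq, hzero] at this
    exact lt_irrefl 0 this
  obtain ⟨j0, hj0mem, hj0pos⟩ := hex
  have h1 : (∑ j ∈ Finset.range n, ‖A j‖ * ρ ^ j) * d ^ n ≤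
      (∑ j ∈ Finset.range n, ‖A j‖ * d ^ j) * ρ ^ n := by
    calc (∑ j ∈ Finset.range n, ‖A j‖ * ρ ^ j) * d ^ n
        = (‖(A n)⁻¹‖⁻¹ * ρ ^ n) * d ^ n := by rw [heq]
    _ = (‖(A n)⁻¹‖⁻¹ * d ^ n) * ρ ^ n := by ring
    _ ≤ (∑ j ∈ Finset.range n, ‖A j‖ * d ^ j) * ρ ^ n :=
        mul_le_mul_of_nonneg_right main (le_of_lt (pow_pos hρ n))
  have h2 : (∑ j ∈ Finset.range n, ‖A j‖ * d ^ j) * ρ ^ n <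
      (∑ j ∈ Finset.range n, ‖A j‖ * ρ ^ j) * d ^ n := by
    rw [Finset.sum_mul, Finset.sum_mul]
    refine Finset.sum_lt_sum (fun j hj => ?_) ⟨j0, hj0mem, ?_⟩
    · have hj' := Finset.mem_range.mp hj
      have e1 : ρ ^ n = ρ ^ j * ρ ^ (n - j) := by rw [← pow_add]; congr 1; omega
      have e2 : d ^ n = d ^ j * d ^ (n - j) := by rw [← pow_add]; congr 1; omega
      have hpow : ρ ^ (n - j) ≤ d ^ (n - j) := pow_le_pow_left₀ hρ.le hcon.le _
      rw [e1, e2]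
      calc ‖A j‖ * d ^ j * (ρ ^ j * ρ ^ (n - j))
          = (‖A j‖ * d ^ j * ρ ^ j) * ρ ^ (n - j) := by ring
      _ ≤ (‖A j‖ * d ^ j * ρ ^ j) * d ^ (n - j) := by
          refine mul_le_mul_of_nonneg_left hpow ?_
          positivity
      _ = ‖A j‖ * ρ ^ j * (d ^ j * d ^ (n - j)) := by ring
    · have hj' := Finset.mem_range.mp hj0mem
      have e1 : ρ ^ n = ρ ^ j0 * ρ ^ (n - j0) := by rw [← pow_add]; congr 1; omega
      have e2 : d ^ n = d ^ j0 * d ^ (n - j0) := by rw [← pow_add]; congr 1; omega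
      have hdpos : 0 < d := hρ.trans hcon
      have hpow : ρ ^ (n - j0) < d ^ (n - j0) :=
        pow_lt_pow_left₀ hcon hρ.le (by omega : n - j0 ≠ 0)
      rw [e1, e2]
      calc ‖A j0‖ * d ^ j0 * (ρ ^ j0 * ρ ^ (n - j0))
          = (‖A j0‖ * d ^ j0 * ρ ^ j0) * ρ ^ (n - j0) := by ring
      _ < (‖A j0‖ * d ^ j0 * ρ ^ j0) * d ^ (n - j0) := by
          refine mul_lt_mul_of_pos_left hpow ?_
          positivity
      _ = ‖A j0‖ * ρ ^ j0 * (d ^ j0 * d ^ (n - j0)) := by ring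
  exact absurd h1 (not_le.mpr h2)
end

section
/- Let A_0, A_1 be m×m complex matrices, let a, b be complex numbers, and let z be a complex number with det(z²I + z A_1 + A_0) = 0. Set d = min(|z − a|, |z − b|). Then d² ≤ ‖A_1 + (a + b)I‖ · d + ‖a A_1 + A_0 + a² I‖, where ‖·‖ denotes the L∞ operator norm on m×m complex matrices (the maximum absolute row-sum norm, i.e., the operator norm induced by the sup norm on ℂ^m). In particular, every eigenvalue of the monic quadratic matrix polynomial Iz² + A_1 z + A_0 lies within distance ρ of a or of b, where ρ is the positive root of x² = ‖A_1 + (a + b)I‖ x + ‖a A_1 + A_0 + a² I‖. -/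
attribute [local instance] Matrix.linftyOpNormedRing

/-- Specialization to a monic quadratic in the Newton basis `1, z - a,
`(z - a)(z - b)`: if `det (z² I + z A₁ + A₀) = 0` and
`d = min (|z - a|, |z - b|)`, then
`d² ≤ ‖A₁ + (a+b)I‖ d + ‖a A₁ + A₀ + a² I‖` (L∞ operator norm); in
particular the eigenvalue `z` lies within distance `ρ` of `a` or of `b`,
for `ρ` the positive root of `x² = ‖A₁ + (a+b)I‖ x + ‖a A₁ + A₀ + a² I‖`. -/
theorem quadratic_newton_inclusion (m : ℕ)
    (A₀ A₁ : Matrix (Fin m) (Fin m) ℂ) (a b z : ℂ)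
    (hz : (z ^ 2 • (1 : Matrix (Fin m) (Fin m) ℂ) + z • A₁ + A₀).det = 0)
    (d : ℝ) (hd : d = min (‖z - a‖) (‖z - b‖)) :
    d ^ 2 ≤ ‖A₁ + (a + b) • (1 : Matrix (Fin m) (Fin m) ℂ)‖ * d +
      ‖a • A₁ + A₀ + a ^ 2 • (1 : Matrix (Fin m) (Fin m) ℂ)‖ ∧
    ∀ ρ : ℝ, 0 < ρ →
      ρ ^ 2 = ‖A₁ + (a + b) • (1 : Matrix (Fin m) (Fin m) ℂ)‖ * ρ +
        ‖a • A₁ + A₀ + a ^ 2 • (1 : Matrix (Fin m) (Fin m) ℂ)‖ →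
      ‖z - a‖ ≤ ρ ∨ ‖z - b‖ ≤ ρ := by
  set B := A₁ + (a + b) • (1 : Matrix (Fin m) (Fin m) ℂ) with hB
  set C := a • A₁ + A₀ + a ^ 2 • (1 : Matrix (Fin m) (Fin m) ℂ) with hC
  have hBn : (0:ℝ) ≤ ‖B‖ := norm_nonneg _
  have hCn : (0:ℝ) ≤ ‖C‖ := norm_nonneg _
  have hda : d ≤ ‖z - a‖ := hd ▸ min_le_left _ _
  have hdb : d ≤ ‖z - b‖ := hd ▸ min_le_right _ _
  have hd0 : 0 ≤ d := hd ▸ le_min (norm_nonneg _) (norm_nonneg _)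
  have key : d ^ 2 ≤ ‖B‖ * d + ‖C‖ := by
    obtain ⟨v, hv0, hMv⟩ := (Matrix.exists_mulVec_eq_zero_iff).mpr hz
    have hnv : 0 < ‖v‖ := norm_pos_iff.mpr hv0
    have hMeq : z ^ 2 • (1 : Matrix (Fin m) (Fin m) ℂ) + z • A₁ + A₀ =
        ((z - a) * (z - b)) • (1 : Matrix (Fin m) (Fin m) ℂ) + (z - a) • B + C := by
      rw [hB, hC]
      ext i j
      simp [Matrix.add_apply, Matrix.smul_apply, Matrix.one_apply, smul_eq_mul]
      split <;> ring
    rw [hMeq] at hMv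
    have heq : (z - a) • ((z - b) • v + B.mulVec v) + C.mulVec v = 0 := by
      have := hMv
      simp only [Matrix.add_mulVec, Matrix.smul_mulVec, Matrix.one_mulVec] at this
      rw [← this]
      simp [smul_add, smul_smul, mul_comm]
    have h1 : ‖z - a‖ * ‖(z - b) • v + B.mulVec v‖ = ‖C.mulVec v‖ := by
      have : (z - a) • ((z - b) • v + B.mulVec v) = -(C.mulVec v) := by
        rw [eq_neg_iff_add_eq_zero]; exact heq
      calc ‖z - a‖ * ‖(z - b) • v + B.mulVec v‖
          = ‖(z - a) • ((z - b) • v + B.mulVec v)‖ := by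
            rw [norm_smul]
        _ = ‖C.mulVec v‖ := by rw [this, norm_neg]
    have h2 : ‖z - b‖ * ‖v‖ - ‖B‖ * ‖v‖ ≤ ‖(z - b) • v + B.mulVec v‖ := by
      have h3 : ‖(z - b) • v‖ - ‖B.mulVec v‖ ≤ ‖(z - b) • v + B.mulVec v‖ := by
        have := norm_sub_norm_le ((z - b) • v) (-(B.mulVec v))
        simpa [sub_neg_eq_add] using this
      have h4 : ‖(z - b) • v‖ = ‖z - b‖ * ‖v‖ := by rw [norm_smul]
      have h5 : ‖B.mulVec v‖ ≤ ‖B‖ * ‖v‖ := Matrix.linfty_opNorm_mulVec _ _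
      linarith
    have h6 : ‖C.mulVec v‖ ≤ ‖C‖ * ‖v‖ := Matrix.linfty_opNorm_mulVec _ _
    -- combine
    have H : ‖z - a‖ * (‖z - b‖ * ‖v‖ - ‖B‖ * ‖v‖) ≤ ‖C‖ * ‖v‖ := by
      rcases le_or_gt (‖z - b‖ * ‖v‖ - ‖B‖ * ‖v‖) 0 with h | h
      · nlinarith [norm_nonneg (z - a)]
      · calc ‖z - a‖ * (‖z - b‖ * ‖v‖ - ‖B‖ * ‖v‖)
            ≤ ‖z - a‖ * ‖(z - b) • v + B.mulVec v‖ :=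
              mul_le_mul_of_nonneg_left h2 (norm_nonneg _)
          _ = ‖C.mulVec v‖ := h1
          _ ≤ ‖C‖ * ‖v‖ := h6
    have Hd : ‖z - a‖ * (‖z - b‖ - ‖B‖) ≤ ‖C‖ := by
      have := H
      have h7 : ‖z - a‖ * (‖z - b‖ - ‖B‖) * ‖v‖ ≤ ‖C‖ * ‖v‖ := by
        nlinarith
      exact le_of_mul_le_mul_right h7 hnv
    rcases le_or_gt d ‖B‖ with h | h
    · nlinarith
    · nlinarith [mul_nonneg (sub_nonneg.mpr hda) (by linarith : (0:ℝ) ≤ ‖z - b‖ - ‖B‖)]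
  refine ⟨key, fun ρ hρ hroot => ?_⟩
  have hdρ : d ≤ ρ := by
    by_contra hlt
    push_neg at hlt
    have hBge : d + ρ ≤ ‖B‖ := by
      by_contra hB2
      push_neg at hB2
      nlinarith [mul_pos (sub_pos.mpr hlt) (sub_pos.mpr hB2)]
    nlinarith [mul_pos hρ (lt_trans hρ hlt)]
  rw [hd] at hdρ
  exact min_le_iff.mp hdρ
end

section
/- Let A_0, A_1 be m×m complex matrices, let a, b, c be complex numbers with b ≠ c, set γ = (|a − b| + |a − c|)/|b − c|, and let z be a complex number with det(z²I + z A_1 + A_0) = 0. Set d = min(|z − a|, |z − b|, |z − c|). Then (d/γ)² ≤ ‖A_1 + (b + c)I‖ · (d/γ) + ‖a A_1 + A_0 + (a(b + c) − bc) I‖, where ‖·‖ denotes the L∞ operator norm on m×m complex matrices (the maximum absolute row-sum norm, i.e., the operator norm induced by the sup norm on ℂ^m). In particular, every eigenvalue of Iz² + A_1 z + A_0 lies within distance γρ of one of a, b, c, where ρ is the positive root of x² = ‖A_1 + (b + c)I‖ x + ‖a A_1 + A_0 + (a(b + c) − bc) I‖. -/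
attribute [local instance] Matrix.linftyOpNormedRing

set_option maxHeartbeats 1600000

/-- Specialization to a monic quadratic in the generalized basis `1, z - a,
`(z - b)(z - c)` with `b ≠ c` and `γ = (|a - b| + |a - c|)/|b - c|`: if
`det (z² I + z A₁ + A₀) = 0` and `d = min (|z-a|, |z-b|, |z-c|)`, then
`(d/γ)² ≤ ‖A₁ + (b+c)I‖ (d/γ) + ‖a A₁ + A₀ + (a(b+c) - bc) I‖` (L∞ operator
norm); in particular `z` lies within distance `γρ` of one of `a, b, c`, for
`ρ` the positive root of
`x² = ‖A₁ + (b+c)I‖ x + ‖a A₁ + A₀ + (a(b+c) - bc) I‖`. -/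
theorem quadratic_generalized_inclusion (m : ℕ)
    (A₀ A₁ : Matrix (Fin m) (Fin m) ℂ) (a b c z : ℂ) (hbc : b ≠ c)
    (γ : ℝ)
    (hγ : γ = (‖a - b‖ + ‖a - c‖) / ‖b - c‖)
    (hz : (z ^ 2 • (1 : Matrix (Fin m) (Fin m) ℂ) + z • A₁ + A₀).det = 0)
    (d : ℝ)
    (hd : d = min (‖z - a‖)
      (min (‖z - b‖) (‖z - c‖))) :
    (d / γ) ^ 2 ≤ ‖A₁ + (b + c) • (1 : Matrix (Fin m) (Fin m) ℂ)‖ * (d / γ) +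
      ‖a • A₁ + A₀ + (a * (b + c) - b * c) • (1 : Matrix (Fin m) (Fin m) ℂ)‖ ∧
    ∀ ρ : ℝ, 0 < ρ →
      ρ ^ 2 = ‖A₁ + (b + c) • (1 : Matrix (Fin m) (Fin m) ℂ)‖ * ρ +
        ‖a • A₁ + A₀ + (a * (b + c) - b * c) • (1 : Matrix (Fin m) (Fin m) ℂ)‖ →
      ‖z - a‖ ≤ γ * ρ ∨ ‖z - b‖ ≤ γ * ρ ∨
        ‖z - c‖ ≤ γ * ρ := by
  set B : Matrix (Fin m) (Fin m) ℂ := A₁ + (b + c) • (1 : Matrix (Fin m) (Fin m) ℂ) with hB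
  set C : Matrix (Fin m) (Fin m) ℂ :=
    a • A₁ + A₀ + (a * (b + c) - b * c) • (1 : Matrix (Fin m) (Fin m) ℂ) with hC
  set s : ℝ := ‖B‖ with hs
  set t : ℝ := ‖C‖ with ht
  set p : ℝ := ‖z - a‖ with hp
  set q : ℝ := ‖z - b‖ with hq
  set r : ℝ := ‖z - c‖ with hr
  set α : ℝ := ‖a - c‖ with hα
  set β : ℝ := ‖a - b‖ with hβ
  set δ : ℝ := ‖b - c‖ with hδ
  have hδ0 : 0 < δ := by
    simpa [hδ] using (norm_pos_iff.mpr (sub_ne_zero.mpr hbc))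
  have hs0 : 0 ≤ s := norm_nonneg _
  have ht0 : 0 ≤ t := norm_nonneg _
  have hp0 : 0 ≤ p := norm_nonneg _
  have hq0 : 0 ≤ q := norm_nonneg _
  have hr0 : 0 ≤ r := norm_nonneg _
  have hα0 : 0 ≤ α := norm_nonneg _
  have hβ0 : 0 ≤ β := norm_nonneg _
  -- triangle: δ ≤ α + β
  have htri : δ ≤ α + β := by
    calc δ = ‖(a - c) - (a - b)‖ := by rw [hδ]; congr 1; ring
    _ ≤ α + β := by
      simpa [hα, hβ] using norm_sub_le (a - c) (a - b)
  have hγδ : γ * δ = α + β := by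
    rw [hγ]; field_simp; ring
  have hγ1 : 1 ≤ γ := by
    rw [hγ, le_div_iff₀ hδ0]
    nlinarith
  have hγ0 : 0 < γ := lt_of_lt_of_le one_pos hγ1
  -- the matrix identity
  have hident : z ^ 2 • (1 : Matrix (Fin m) (Fin m) ℂ) + z • A₁ + A₀ =
      ((z - b) * (z - c)) • (1 : Matrix (Fin m) (Fin m) ℂ) + (z - a) • B + C := by
    rw [hB, hC]
    ext i j
    simp only [Matrix.add_apply, Matrix.smul_apply, Matrix.one_apply, smul_eq_mul,
      mul_ite, mul_one, mul_zero]
    split_ifs <;> ring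
  rw [hident] at hz
  -- key norm inequality
  have key : q * r ≤ s * p + t := by
    obtain ⟨v, hv0, hv⟩ := Matrix.exists_mulVec_eq_zero_iff.mpr hz
    rw [Matrix.add_mulVec, Matrix.add_mulVec, Matrix.smul_mulVec,
      Matrix.smul_mulVec, Matrix.one_mulVec, add_assoc] at hv
    have hv' : ((z - b) * (z - c)) • v = -((z - a) • (B.mulVec v) + C.mulVec v) :=
      eq_neg_of_add_eq_zero_left hv
    have hn : q * r * ‖v‖ ≤ (s * p + t) * ‖v‖ := by
      have e1 : ‖((z - b) * (z - c)) • v‖ = (q * r) * ‖v‖ := by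
        rw [norm_smul, norm_mul, hq, hr]
      calc (q * r) * ‖v‖ = ‖((z - b) * (z - c)) • v‖ := e1.symm
        _ = ‖(z - a) • (B.mulVec v) + C.mulVec v‖ := by rw [hv', norm_neg]
        _ ≤ ‖(z - a) • (B.mulVec v)‖ + ‖C.mulVec v‖ := norm_add_le _ _
        _ ≤ p * (s * ‖v‖) + t * ‖v‖ := by
            have hBv := Matrix.linfty_opNorm_mulVec B v
            have hCv := Matrix.linfty_opNorm_mulVec C v
            have e2 : ‖(z - a) • (B.mulVec v)‖ = p * ‖B.mulVec v‖ := by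
              rw [norm_smul, hp]
            rw [e2]
            have h3 := mul_le_mul_of_nonneg_left hBv hp0
            rw [← hs, ← ht] at *
            linarith
        _ = (s * p + t) * ‖v‖ := by ring
    exact le_of_mul_le_mul_right hn (norm_pos_iff.mpr hv0)
  -- the identity-based triangle inequality
  have h2 : p * δ ≤ q * α + r * β := by
    calc p * δ = ‖(z - b) * (a - c) - (z - c) * (a - b)‖ := by
          rw [hp, hδ, ← norm_mul]; congr 1; ring
      _ ≤ ‖(z - b) * (a - c)‖ + ‖(z - c) * (a - b)‖ :=
          norm_sub_le _ _
      _ = q * α + r * β := by rw [norm_mul, norm_mul, hq, hα, hr, hβ]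
  have hdp : d ≤ p := by rw [hd]; exact min_le_left _ _
  have hdq : d ≤ q := by rw [hd]; exact le_trans (min_le_right _ _) (min_le_left _ _)
  have hdr : d ≤ r := by rw [hd]; exact le_trans (min_le_right _ _) (min_le_right _ _)
  have hd0 : 0 ≤ d := by rw [hd]; positivity
  have hγ2 : (1:ℝ) ≤ γ ^ 2 := by nlinarith
  -- the main scalar inequality
  have hd2 : d ^ 2 ≤ γ * s * d + γ ^ 2 * t := by
    rcases le_total p (min q r) with h | h
    · -- d = p
      have hdp' : d = p := by rw [hd, min_eq_left h]
      have h1 : d * d ≤ q * r := mul_le_mul hdq hdr hd0 hq0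
      nlinarith [mul_nonneg (mul_nonneg (sub_nonneg.mpr hγ1) hs0) hd0,
        mul_nonneg (sub_nonneg.mpr hγ2) ht0]
    · rcases le_total q r with h' | h'
      · -- d = q
        have hdq' : d = q := by rw [hd, min_eq_right h, min_eq_left h']
        rw [hdq']
        by_cases hcase : q * δ ≤ s * β
        · have hq_le : q ≤ γ * s := by
            nlinarith [mul_nonneg hs0 hα0, hγδ, hδ0, hcase]
          nlinarith [mul_nonneg (sub_nonneg.mpr hγ2) ht0]
        · push_neg at hcase
          have h3 : q * r * δ ≤ s * (q * α + r * β) + t * δ := by nlinarith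
          have h4 : q * (q * δ - s * β) ≤ r * (q * δ - s * β) :=
            mul_le_mul_of_nonneg_right h' (le_of_lt (sub_pos.mpr hcase))
          have h5 : q ^ 2 * δ ≤ s * q * (α + β) + t * δ := by nlinarith
          rw [← hγδ] at h5
          have h6 : q ^ 2 ≤ γ * s * q + t := by nlinarith
          nlinarith [mul_nonneg (sub_nonneg.mpr hγ2) ht0]
      · -- d = r
        have hdr' : d = r := by rw [hd, min_eq_right h, min_eq_right h']
        rw [hdr']
        by_cases hcase : r * δ ≤ s * α
        · have hr_le : r ≤ γ * s := by
            nlinarith [mul_nonneg hs0 hβ0, hγδ, hδ0, hcase]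
          nlinarith [mul_nonneg (sub_nonneg.mpr hγ2) ht0]
        · push_neg at hcase
          have h3 : q * r * δ ≤ s * (q * α + r * β) + t * δ := by nlinarith
          have h4 : r * (r * δ - s * α) ≤ q * (r * δ - s * α) :=
            mul_le_mul_of_nonneg_right h' (le_of_lt (sub_pos.mpr hcase))
          have h5 : r ^ 2 * δ ≤ s * r * (α + β) + t * δ := by nlinarith
          rw [← hγδ] at h5
          have h6 : r ^ 2 ≤ γ * s * r + t := by nlinarith
          nlinarith [mul_nonneg (sub_nonneg.mpr hγ2) ht0]
  constructor
  · rw [div_pow, div_le_iff₀ (by positivity : (0:ℝ) < γ ^ 2)]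
    have e : (s * (d / γ) + t) * γ ^ 2 = γ * s * d + γ ^ 2 * t := by
      field_simp
    rw [e]
    exact hd2
  · intro ρ hρ0 hρ
    have hρs : s ≤ ρ := by nlinarith
    have hdle : d ≤ γ * ρ := by
      by_contra hcon
      push_neg at hcon
      have hpos : 0 < d + γ * ρ - γ * s := by
        have h7 : 0 ≤ γ * (ρ - s) := mul_nonneg (le_of_lt hγ0) (sub_nonneg.mpr hρs)
        have h8 : 0 < γ * ρ := mul_pos hγ0 hρ0
        nlinarith
      have hρ' : γ ^ 2 * ρ ^ 2 = γ ^ 2 * s * ρ + γ ^ 2 * t := by rw [hρ]; ring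
      nlinarith [hρ', hd2, mul_pos (sub_pos.mpr hcon) hpos]
    rw [hd] at hdle
    rcases min_le_iff.mp hdle with h | h
    · exact Or.inl h
    · rcases min_le_iff.mp h with h' | h'
      · exact Or.inr (Or.inl h')
      · exact Or.inr (Or.inr h')
end
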